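/- arXiv:1005.2958 — 3 statements merged into one kernel-verified Lean document; each statement's English description precedes it below -/
import Mathlib

section
/- For every element ħ of R and every formal power series V ∈ R[[x_1,…,x_r]], there exists a unique formal power series Ψ ∈ A satisfying the heat-type system ∂Ψ/∂s_{ij} = (ħ/{ij}!) · ∂²Ψ/∂x_i∂x_j for all 1 ≤ i ≤ j ≤ r, together with the initial condition Ψ|_{S=0} = V. -/
/-- Index type for the variables `s_{ij}`, `1 ≤ i ≤ j ≤ r`. -/
def SVar (r : ℕ) := {p : Fin r × Fin r // p.1 ≤ p.2}

instance {r : ℕ} : DecidableEq (SVar r) :=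
  inferInstanceAs (DecidableEq {p : Fin r × Fin r // p.1 ≤ p.2})

instance {r : ℕ} : Fintype (SVar r) :=
  inferInstanceAs (Fintype {p : Fin r × Fin r // p.1 ≤ p.2})

/-- The index of the variable `s_{ij} = s_{ji}` for arbitrary `i j`. -/
def sIdx {r : ℕ} (i j : Fin r) : SVar r :=
  if h : i ≤ j then ⟨(i, j), h⟩ else ⟨(j, i), le_of_not_ge h⟩

/-- Formal partial derivative `∂f/∂x_i` of a multivariate formal power series:
the coefficient of `∂f/∂x_i` at a monomial `m` is `(m i + 1) · (coeff of f at m + {i})`. -/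
noncomputable def pd {σ : Type*} (R : Type*) [CommSemiring R]
    (i : σ) (f : MvPowerSeries σ R) : MvPowerSeries σ R :=
  fun m => (((m i) + 1 : ℕ) : R) * MvPowerSeries.coeff (R := R) (m + Finsupp.single i 1) f

/-- Substitution of `s_{ij} = 0` for all `i ≤ j`: restriction to the `x`-variables. -/
noncomputable def resS0 {r : ℕ} {R : Type*} [CommSemiring R]
    (f : MvPowerSeries (Fin r ⊕ SVar r) R) : MvPowerSeries (Fin r) R :=
  fun m => MvPowerSeries.coeff (R := R) (Finsupp.mapDomain Sum.inl m) f

namespace Stmt0Aux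

open Finsupp

/-- ascending factorial `(a+1)(a+2)⋯(a+k)` -/
def af (a : ℕ) : ℕ → ℕ
  | 0 => 1
  | k + 1 => (a + k + 1) * af a k

lemma af_add (a m : ℕ) : ∀ k, af a (m + k) = af a m * af (a + m) k
  | 0 => (mul_one _).symm
  | k + 1 => by
      show af a ((m + k) + 1) = af a m * af (a + m) (k + 1)
      simp only [af]
      rw [af_add a m k]; ring

lemma af_ite (a : ℕ) (c : Prop) [Decidable c] :
    af a (if c then 1 else 0) = if c then a + 1 else 1 := by
  split <;> simp [af]

variable {r : ℕ}

def multF (p : SVar r) (l : Fin r) : ℕ :=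
  (if p.1.1 = l then 1 else 0) + (if p.1.2 = l then 1 else 0)

def sdeg (b : SVar r →₀ ℕ) : ℕ := ∑ p, b p

def cQ (p : SVar r) : ℚ := if p.1.1 = p.1.2 then (2 : ℚ)⁻¹ else 1

noncomputable def qb (b : SVar r →₀ ℕ) : ℚ := ∏ p, cQ p ^ b p / (b p).factorial

noncomputable def Kb (b : SVar r →₀ ℕ) : Fin r →₀ ℕ :=
  Finsupp.equivFunOnFinite.symm fun l => ∑ p, b p * multF p l

lemma Kb_apply (b : SVar r →₀ ℕ) (l : Fin r) : Kb b l = ∑ p, b p * multF p l := rfl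

noncomputable def Nn (a : Fin r →₀ ℕ) (b : SVar r →₀ ℕ) : ℕ := ∏ l, af (a l) (Kb b l)

lemma sdeg_zero : sdeg (0 : SVar r →₀ ℕ) = 0 := by simp [sdeg]

lemma qb_zero : qb (0 : SVar r →₀ ℕ) = 1 := by simp [qb]

lemma Kb_zero : Kb (0 : SVar r →₀ ℕ) = 0 := by
  ext l; simp [Kb_apply]

lemma Nn_zero (a : Fin r →₀ ℕ) : Nn a 0 = 1 := by
  simp [Nn, Kb_zero, af]

lemma sdeg_step (b : SVar r →₀ ℕ) (p : SVar r) :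
    sdeg (b + Finsupp.single p 1) = sdeg b + 1 := by
  simp [sdeg, Finsupp.add_apply, Finsupp.single_apply, Finset.sum_add_distrib]

lemma qb_step (b : SVar r →₀ ℕ) (p : SVar r) :
    qb (b + Finsupp.single p 1) = cQ p / ((b p : ℚ) + 1) * qb b := by
  have hpp : (b + Finsupp.single p 1 : SVar r →₀ ℕ) p = b p + 1 := by simp
  have hprod : (∏ q ∈ Finset.univ.erase p,
        cQ q ^ ((b + Finsupp.single p 1 : SVar r →₀ ℕ) q) / ((b + Finsupp.single p 1 : SVar r →₀ ℕ) q).factorial)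
      = ∏ q ∈ Finset.univ.erase p, cQ q ^ (b q) / (b q).factorial := by
    refine Finset.prod_congr rfl fun q hq => ?_
    have hne : p ≠ q := fun e => (Finset.mem_erase.mp hq).1 e.symm
    rw [show (b + Finsupp.single p 1 : SVar r →₀ ℕ) q = b q by
      simp [Finsupp.add_apply, Finsupp.single_apply, hne]]
  rw [qb, ← Finset.mul_prod_erase Finset.univ _ (Finset.mem_univ p), qb,
    ← Finset.mul_prod_erase Finset.univ _ (Finset.mem_univ p)]
  beta_reduce
  rw [hpp, hprod, pow_succ, Nat.factorial_succ]
  have h1 : ((b p : ℚ) + 1) ≠ 0 := by positivity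
  have h2 : ((b p).factorial : ℚ) ≠ 0 := Nat.cast_ne_zero.mpr (Nat.factorial_ne_zero _)
  push_cast
  field_simp

lemma Kb_step (b : SVar r →₀ ℕ) (p : SVar r) :
    Kb (b + Finsupp.single p 1)
      = Kb b + Finsupp.single p.1.1 1 + Finsupp.single p.1.2 1 := by
  ext l
  have hstep : ∀ q : SVar r, (b + Finsupp.single p 1 : SVar r →₀ ℕ) q * multF q l
      = b q * multF q l + (if p = q then multF q l else 0) := by
    intro q
    by_cases h : p = q <;> simp [Finsupp.add_apply, Finsupp.single_apply, h, add_mul]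
  rw [Finsupp.add_apply, Finsupp.add_apply, Kb_apply, Kb_apply,
    Finset.sum_congr rfl fun q _ => hstep q, Finset.sum_add_distrib,
    Finset.sum_ite_eq Finset.univ p (fun q => multF q l), if_pos (Finset.mem_univ p)]
  simp [multF, Finsupp.single_apply]
  ring

lemma Nn_step (a : Fin r →₀ ℕ) (b : SVar r →₀ ℕ) (p : SVar r) :
    Nn a (b + Finsupp.single p 1)
      = (a p.1.1 + 1) * ((a + Finsupp.single p.1.1 1 : Fin r →₀ ℕ) p.1.2 + 1)
          * Nn (a + Finsupp.single p.1.1 1 + Finsupp.single p.1.2 1) b := by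
  set i := p.1.1
  set j := p.1.2
  have hK : ∀ l, Kb (b + Finsupp.single p 1) l
      = ((if i = l then 1 else 0) + (if j = l then 1 else 0)) + Kb b l := by
    intro l
    rw [Kb_step]
    simp [Finsupp.add_apply, Finsupp.single_apply]
    ring
  have step1 : Nn a (b + Finsupp.single p 1)
      = ∏ l, (af (a l) (if i = l then 1 else 0)
          * (af (a l + (if i = l then 1 else 0)) (if j = l then 1 else 0)
            * af (a l + (if i = l then 1 else 0) + (if j = l then 1 else 0)) (Kb b l))) := by
    show (∏ l, af (a l) (Kb (b + Finsupp.single p 1) l)) = _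
    refine Finset.prod_congr rfl fun l _ => ?_
    rw [hK l, af_add, af_add, ← add_assoc, mul_assoc]
  rw [step1, Finset.prod_mul_distrib, Finset.prod_mul_distrib]
  have e1 : (∏ l, af (a l) (if i = l then 1 else 0)) = a i + 1 := by
    rw [Finset.prod_congr rfl fun l _ => af_ite (a l) (i = l),
      Finset.prod_ite_eq Finset.univ i (fun l => a l + 1), if_pos (Finset.mem_univ i)]
  have e2 : (∏ l, af (a l + (if i = l then 1 else 0)) (if j = l then 1 else 0))
      = (a + Finsupp.single i 1 : Fin r →₀ ℕ) j + 1 := by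
    rw [Finset.prod_congr rfl fun l _ => af_ite _ (j = l),
      Finset.prod_ite_eq Finset.univ j (fun l => a l + (if i = l then 1 else 0) + 1),
      if_pos (Finset.mem_univ j)]
    simp [Finsupp.add_apply, Finsupp.single_apply]
  have e3 : (∏ l, af (a l + (if i = l then 1 else 0) + (if j = l then 1 else 0)) (Kb b l))
      = Nn (a + Finsupp.single i 1 + Finsupp.single j 1) b := by
    refine (Finset.prod_congr rfl fun l _ => ?_).symm
    congr 1
    simp [Finsupp.add_apply, Finsupp.single_apply]
  rw [e1, e2, e3]
  ring

section Ring

variable {R : Type*} [CommRing R] [Algebra ℚ R]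

lemma natCast_mul_eq_smul (n : ℕ) (x : R) : (n : R) * x = (n : ℚ) • x := by
  rw [Nat.cast_smul_eq_nsmul, nsmul_eq_mul]

noncomputable def Fc (hbar : R) (V : MvPowerSeries (Fin r) R)
    (a : Fin r →₀ ℕ) (b : SVar r →₀ ℕ) : R :=
  qb b • (hbar ^ sdeg b * (Nn a b : R) * V (a + Kb b))

lemma Fc_zero (hbar : R) (V : MvPowerSeries (Fin r) R) (a : Fin r →₀ ℕ) :
    Fc hbar V a 0 = V a := by
  simp [Fc, qb_zero, sdeg_zero, Kb_zero, Nn_zero]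

lemma Fc_step (hbar : R) (V : MvPowerSeries (Fin r) R)
    (a : Fin r →₀ ℕ) (b : SVar r →₀ ℕ) (p : SVar r) :
    ((b p + 1 : ℕ) : R) * Fc hbar V a (b + Finsupp.single p 1)
      = cQ p • (hbar * (((a p.1.1 + 1 : ℕ) : R)
          * ((((a + Finsupp.single p.1.1 1 : Fin r →₀ ℕ) p.1.2 + 1 : ℕ) : R)
            * Fc hbar V (a + Finsupp.single p.1.1 1 + Finsupp.single p.1.2 1) b))) := by
  set i := p.1.1
  set j := p.1.2
  have harg : a + Kb (b + Finsupp.single p 1)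
      = (a + Finsupp.single i 1 + Finsupp.single j 1) + Kb b := by
    rw [Kb_step]; abel
  rw [Fc, Fc, natCast_mul_eq_smul, smul_smul, qb_step, sdeg_step, harg, Nn_step]
  have hq : ((b p + 1 : ℕ) : ℚ) * (cQ p / ((b p : ℚ) + 1) * qb b) = cQ p * qb b := by
    have h1 : ((b p : ℚ) + 1) ≠ 0 := by positivity
    push_cast
    field_simp
  rw [hq]
  have hr : cQ p • (hbar * (((a i + 1 : ℕ) : R)
        * ((((a + Finsupp.single i 1 : Fin r →₀ ℕ) j + 1 : ℕ) : R)
          * (qb b • (hbar ^ sdeg b * (Nn (a + Finsupp.single i 1 + Finsupp.single j 1) b : R)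
              * V (a + Finsupp.single i 1 + Finsupp.single j 1 + Kb b))))))
      = (cQ p * qb b) • (hbar * (((a i + 1 : ℕ) : R)
        * ((((a + Finsupp.single i 1 : Fin r →₀ ℕ) j + 1 : ℕ) : R)
          * (hbar ^ sdeg b * (Nn (a + Finsupp.single i 1 + Finsupp.single j 1) b : R)
              * V (a + Finsupp.single i 1 + Finsupp.single j 1 + Kb b))))) := by
    rw [mul_smul]
    congr 1
    rw [mul_smul_comm, mul_smul_comm, mul_smul_comm]
  rw [hr]
  congr 1
  push_cast
  ring

noncomputable def mL (m : (Fin r ⊕ SVar r) →₀ ℕ) : Fin r →₀ ℕ :=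
  Finsupp.comapDomain Sum.inl m Sum.inl_injective.injOn

noncomputable def mRf (m : (Fin r ⊕ SVar r) →₀ ℕ) : SVar r →₀ ℕ :=
  Finsupp.comapDomain Sum.inr m Sum.inr_injective.injOn

lemma mL_apply (m : (Fin r ⊕ SVar r) →₀ ℕ) (l : Fin r) : mL m l = m (Sum.inl l) := rfl

lemma mRf_apply (m : (Fin r ⊕ SVar r) →₀ ℕ) (p : SVar r) : mRf m p = m (Sum.inr p) := rfl

lemma mL_add_inr (m : (Fin r ⊕ SVar r) →₀ ℕ) (p : SVar r) :
    mL (m + Finsupp.single (Sum.inr p) 1) = mL m := by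
  ext l; simp [mL_apply, Finsupp.add_apply, Finsupp.single_apply]

lemma mRf_add_inr (m : (Fin r ⊕ SVar r) →₀ ℕ) (p : SVar r) :
    mRf (m + Finsupp.single (Sum.inr p) 1) = mRf m + Finsupp.single p 1 := by
  ext q; simp [mRf_apply, Finsupp.add_apply, Finsupp.single_apply, Sum.inr.injEq]

lemma mL_add_inl (m : (Fin r ⊕ SVar r) →₀ ℕ) (i : Fin r) :
    mL (m + Finsupp.single (Sum.inl i) 1) = mL m + Finsupp.single i 1 := by
  ext l; simp [mL_apply, Finsupp.add_apply, Finsupp.single_apply, Sum.inl.injEq]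

lemma mRf_add_inl (m : (Fin r ⊕ SVar r) →₀ ℕ) (i : Fin r) :
    mRf (m + Finsupp.single (Sum.inl i) 1) = mRf m := by
  ext q; simp [mRf_apply, Finsupp.add_apply, Finsupp.single_apply]

lemma mL_mapDomain (a : Fin r →₀ ℕ) : mL (Finsupp.mapDomain Sum.inl a) = a := by
  ext l; rw [mL_apply, Finsupp.mapDomain_apply Sum.inl_injective]

lemma mRf_mapDomain (a : Fin r →₀ ℕ) : mRf (Finsupp.mapDomain Sum.inl a) = 0 := by
  ext q
  rw [mRf_apply, Finsupp.mapDomain_notin_range]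
  · rfl
  · simp

lemma mapDomain_mL {m : (Fin r ⊕ SVar r) →₀ ℕ} (h : mRf m = 0) :
    Finsupp.mapDomain Sum.inl (mL m) = m := by
  ext x
  cases x with
  | inl l => rw [Finsupp.mapDomain_apply Sum.inl_injective, mL_apply]
  | inr p =>
      rw [Finsupp.mapDomain_notin_range _ _ (by simp)]
      have := congrArg (fun f : SVar r →₀ ℕ => f p) h
      simpa [mRf_apply] using this.symm

noncomputable def Psi (hbar : R) (V : MvPowerSeries (Fin r) R) :
    MvPowerSeries (Fin r ⊕ SVar r) R :=
  fun m => Fc hbar V (mL m) (mRf m)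

lemma pd_apply {σ : Type*} (s : σ) (f : MvPowerSeries σ R) (m : σ →₀ ℕ) :
    pd R s f m = ((m s + 1 : ℕ) : R) * f (m + Finsupp.single s 1) := by
  simp [pd, MvPowerSeries.coeff_apply]

lemma smul_mul_apply {σ : Type*} (c : ℚ) (hbar : R) (g : MvPowerSeries σ R) (m : σ →₀ ℕ) :
    (c • (MvPowerSeries.C (σ := σ) (R := R) hbar * g)) m = c • (hbar * g m) := by
  have h : (MvPowerSeries.C (σ := σ) (R := R) hbar * g) m = hbar * g m := by
    have h2 := MvPowerSeries.coeff_C_mul m g hbar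
    simpa only [MvPowerSeries.coeff_apply] using h2
  calc (c • (MvPowerSeries.C (σ := σ) (R := R) hbar * g)) m
      = c • ((MvPowerSeries.C (σ := σ) (R := R) hbar * g) m) := rfl
    _ = c • (hbar * g m) := by rw [h]

lemma sIdx_eta (p : SVar r) : sIdx p.1.1 p.1.2 = p := by
  obtain ⟨⟨a, b⟩, h⟩ := p
  exact dif_pos h


lemma psi_pde (hbar : R) (V : MvPowerSeries (Fin r) R) :
    ∀ i j : Fin r, i ≤ j →
      pd R (Sum.inr (sIdx i j)) (Psi hbar V) =
        (if i = j then (2 : ℚ)⁻¹ else 1) •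
          (MvPowerSeries.C (σ := Fin r ⊕ SVar r) (R := R) hbar *
            pd R (Sum.inl i) (pd R (Sum.inl j) (Psi hbar V))) := by
  intro i j hij
  have hp1 : (sIdx i j).1.1 = i := by simp [sIdx, hij]
  have hp2 : (sIdx i j).1.2 = j := by simp [sIdx, hij]
  set p := sIdx i j with hp
  funext m
  rw [show ((if i = j then (2 : ℚ)⁻¹ else 1) •
      (MvPowerSeries.C (σ := Fin r ⊕ SVar r) (R := R) hbar *
        pd R (Sum.inl i) (pd R (Sum.inl j) (Psi hbar V)))) m
    = (if i = j then (2 : ℚ)⁻¹ else 1) •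
        (hbar * (pd R (Sum.inl i) (pd R (Sum.inl j) (Psi hbar V))) m) from
    smul_mul_apply _ _ _ _]
  rw [pd_apply, pd_apply, pd_apply]
  show ((m (Sum.inr p) + 1 : ℕ) : R) * Psi hbar V (m + Finsupp.single (Sum.inr p) 1) = _
  rw [show Psi hbar V (m + Finsupp.single (Sum.inr p) 1)
      = Fc hbar V (mL m) (mRf m + Finsupp.single p 1) by
    rw [Psi]; rw [mL_add_inr, mRf_add_inr]]
  rw [show Psi hbar V (m + Finsupp.single (Sum.inl i) 1 + Finsupp.single (Sum.inl j) 1)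
      = Fc hbar V (mL m + Finsupp.single i 1 + Finsupp.single j 1) (mRf m) by
    rw [Psi]; rw [mL_add_inl, mL_add_inl, mRf_add_inl, mRf_add_inl]]
  have hcq : (if i = j then (2 : ℚ)⁻¹ else 1) = cQ p := by rw [cQ, hp1, hp2]
  have h1 : m (Sum.inr p) = mRf m p := rfl
  have h2 : m (Sum.inl i) = mL m i := rfl
  have h3 : (m + Finsupp.single (Sum.inl i) 1 : (Fin r ⊕ SVar r) →₀ ℕ) (Sum.inl j)
      = (mL m + Finsupp.single i 1 : Fin r →₀ ℕ) j := by
    simp [mL_apply, Finsupp.add_apply, Finsupp.single_apply, Sum.inl.injEq]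
  rw [hcq, h1, h2, h3]
  have := Fc_step hbar V (mL m) (mRf m) p
  rw [hp1, hp2] at this
  exact this

lemma psi_res (hbar : R) (V : MvPowerSeries (Fin r) R) : resS0 (Psi hbar V) = V := by
  funext a
  show Fc hbar V (mL (Finsupp.mapDomain Sum.inl a)) (mRf (Finsupp.mapDomain Sum.inl a)) = V a
  rw [mL_mapDomain, mRf_mapDomain, Fc_zero]

lemma rec_of_pde {hbar : R}
    {Ψ : MvPowerSeries (Fin r ⊕ SVar r) R}
    (h : ∀ i j : Fin r, i ≤ j →
      pd R (Sum.inr (sIdx i j)) Ψ =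
        (if i = j then (2 : ℚ)⁻¹ else 1) •
          (MvPowerSeries.C (σ := Fin r ⊕ SVar r) (R := R) hbar *
            pd R (Sum.inl i) (pd R (Sum.inl j) Ψ)))
    (p : SVar r) (m : (Fin r ⊕ SVar r) →₀ ℕ) :
    Ψ (m + Finsupp.single (Sum.inr p) 1) =
      (((m (Sum.inr p) + 1 : ℕ) : ℚ))⁻¹ •
        ((if p.1.1 = p.1.2 then (2 : ℚ)⁻¹ else 1) •
          (hbar * (((m (Sum.inl p.1.1) + 1 : ℕ) : R) *
            ((((m + Finsupp.single (Sum.inl p.1.1) 1 : (Fin r ⊕ SVar r) →₀ ℕ) (Sum.inl p.1.2) + 1 : ℕ) : R) *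
              Ψ (m + Finsupp.single (Sum.inl p.1.1) 1 + Finsupp.single (Sum.inl p.1.2) 1))))) := by
  have h0 := h p.1.1 p.1.2 p.2
  rw [sIdx_eta] at h0
  have h1 := congrFun h0 m
  rw [show ((if p.1.1 = p.1.2 then (2 : ℚ)⁻¹ else 1) •
      (MvPowerSeries.C (σ := Fin r ⊕ SVar r) (R := R) hbar *
        pd R (Sum.inl p.1.1) (pd R (Sum.inl p.1.2) Ψ))) m
    = (if p.1.1 = p.1.2 then (2 : ℚ)⁻¹ else 1) •
        (hbar * (pd R (Sum.inl p.1.1) (pd R (Sum.inl p.1.2) Ψ)) m) from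
    smul_mul_apply _ _ _ _] at h1
  rw [pd_apply, pd_apply, pd_apply, natCast_mul_eq_smul] at h1
  have hne : ((m (Sum.inr p) + 1 : ℕ) : ℚ) ≠ 0 := by positivity
  rw [← h1, smul_smul, inv_mul_cancel₀ hne, one_smul]

lemma uniq (hbar : R) (V : MvPowerSeries (Fin r) R)
    {Ψ : MvPowerSeries (Fin r ⊕ SVar r) R}
    (h1 : ∀ i j : Fin r, i ≤ j →
      pd R (Sum.inr (sIdx i j)) Ψ =
        (if i = j then (2 : ℚ)⁻¹ else 1) •
          (MvPowerSeries.C (σ := Fin r ⊕ SVar r) (R := R) hbar *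
            pd R (Sum.inl i) (pd R (Sum.inl j) Ψ)))
    (h2 : resS0 Ψ = V) : Ψ = Psi hbar V := by
  funext m
  suffices H : ∀ n (m : (Fin r ⊕ SVar r) →₀ ℕ), sdeg (mRf m) = n → Ψ m = Psi hbar V m from
    H _ m rfl
  intro n
  induction n using Nat.strong_induction_on with
  | _ n IH =>
    intro m hm
    by_cases h0 : mRf m = 0
    · have hmm : Finsupp.mapDomain Sum.inl (mL m) = m := mapDomain_mL h0
      calc Ψ m = Ψ (Finsupp.mapDomain Sum.inl (mL m)) := by rw [hmm]
        _ = resS0 Ψ (mL m) := rfl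
        _ = V (mL m) := by rw [h2]
        _ = resS0 (Psi hbar V) (mL m) := by rw [psi_res]
        _ = Psi hbar V (Finsupp.mapDomain Sum.inl (mL m)) := rfl
        _ = Psi hbar V m := by rw [hmm]
    · obtain ⟨p, hp⟩ : ∃ p, mRf m p ≠ 0 := by
        by_contra hc
        push_neg at hc
        exact h0 (Finsupp.ext hc)
      set m' := m - Finsupp.single (Sum.inr p) 1 with hm'def
      have hsplit : m = m' + Finsupp.single (Sum.inr p) 1 := by
        ext x
        rw [hm'def]
        rw [Finsupp.add_apply, Finsupp.tsub_apply]
        by_cases hx : (Sum.inr p : Fin r ⊕ SVar r) = x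
        · subst hx
          rw [Finsupp.single_eq_same]
          have : m (Sum.inr p) ≠ 0 := by rwa [← mRf_apply]
          omega
        · rw [Finsupp.single_eq_of_ne' hx]
          omega
      have hdeg' : sdeg (mRf m') + 1 = n := by
        rw [hsplit, mRf_add_inr, sdeg_step] at hm
        exact hm
      have hlt : sdeg (mRf m') < n := by omega
      have hinner : Ψ (m' + Finsupp.single (Sum.inl p.1.1) 1 + Finsupp.single (Sum.inl p.1.2) 1)
          = Psi hbar V (m' + Finsupp.single (Sum.inl p.1.1) 1 + Finsupp.single (Sum.inl p.1.2) 1) := by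
        refine IH _ hlt _ ?_
        rw [mRf_add_inl, mRf_add_inl]
      rw [hsplit, rec_of_pde h1 p m', rec_of_pde (psi_pde hbar V) p m', hinner]

end Ring

end Stmt0Aux

/-- For every `ħ ∈ R` and every `V ∈ R[[x_1,…,x_r]]` there is a unique
formal power series `Ψ ∈ R[[x; s]]` with `∂Ψ/∂s_{ij} = (ħ/{ij}!)·∂²Ψ/∂x_i∂x_j`
for all `i ≤ j`, and `Ψ|_{S=0} = V`. -/
theorem stmt0 {r : ℕ} (hr : 1 ≤ r) (R : Type*) [CommRing R] [Algebra ℚ R]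
    (hbar : R) (V : MvPowerSeries (Fin r) R) :
    ∃! Ψ : MvPowerSeries (Fin r ⊕ SVar r) R,
      (∀ i j : Fin r, i ≤ j →
        pd R (Sum.inr (sIdx i j)) Ψ =
          (if i = j then (2 : ℚ)⁻¹ else 1) •
            (MvPowerSeries.C (σ := Fin r ⊕ SVar r) (R := R) hbar *
              pd R (Sum.inl i) (pd R (Sum.inl j) Ψ))) ∧
      resS0 Ψ = V := by
  refine ⟨Stmt0Aux.Psi hbar V, ⟨Stmt0Aux.psi_pde hbar V, Stmt0Aux.psi_res hbar V⟩, ?_⟩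
  rintro Ψ ⟨hPDE, hres⟩
  exact Stmt0Aux.uniq hbar V hPDE hres
end

section
/- For every element ħ of R and every formal power series U ∈ R[[x_1,…,x_r]], there exists a unique formal power series Ψ ∈ A satisfying the Burgers-type system ∂Ψ/∂s_{ij} = (ħ/{ij}!) · [ ∂²Ψ/∂x_i∂x_j + (∂Ψ/∂x_i)(∂Ψ/∂x_j) ] for all 1 ≤ i ≤ j ≤ r, together with the initial condition Ψ|_{S=0} = U. -/
namespace Burgers

open MvPowerSeries Finsupp Finset

variable {σ : Type*} {R : Type*}

/-- degree of a monomial -/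
def deg {σ : Type*} (m : σ →₀ ℕ) : ℕ := m.sum fun _ n => n

theorem deg_add (a b : σ →₀ ℕ) : deg (a + b) = deg a + deg b :=
  Finsupp.sum_add_index' (fun _ => rfl) (fun _ _ _ => rfl)

@[simp] theorem deg_zero : deg (0 : σ →₀ ℕ) = 0 := Finsupp.sum_zero_index

@[simp] theorem deg_single (i : σ) (n : ℕ) : deg (Finsupp.single i n) = n :=
  Finsupp.sum_single_index rfl

theorem deg_eq_zero {m : σ →₀ ℕ} (h : deg m = 0) : m = 0 := by
  ext a
  simp only [Finsupp.coe_zero, Pi.zero_apply]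
  by_contra ha
  have hmem : a ∈ m.support := Finsupp.mem_support_iff.2 ha
  have hle : m a ≤ deg m :=
    Finset.single_le_sum (f := fun a => m a) (fun _ _ => Nat.zero_le _) hmem
  omega

section CommSemiring

variable [CommSemiring R]

theorem coeff_pd (i : σ) (f : MvPowerSeries σ R) (m : σ →₀ ℕ) :
    MvPowerSeries.coeff (R := R) m (pd R i f) =
      ((m i + 1 : ℕ) : R) * MvPowerSeries.coeff (R := R) (m + Finsupp.single i 1) f := rfl

theorem pd_add (i : σ) (f g : MvPowerSeries σ R) :
    pd R i (f + g) = pd R i f + pd R i g := by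
  apply MvPowerSeries.ext; intro m
  rw [map_add, coeff_pd, coeff_pd, coeff_pd, map_add]
  ring

theorem smul_apply' {S : Type*} [Semiring S] [Module S R] (s : S) (f : MvPowerSeries σ R) (m : σ →₀ ℕ) :
    MvPowerSeries.coeff (R := R) m (s • f) = s • MvPowerSeries.coeff (R := R) m f := rfl

theorem pd_smul {S : Type*} [Semiring S] [Module S R] [SMulCommClass S R R]
    (s : S) (i : σ) (f : MvPowerSeries σ R) :
    pd R i (s • f) = s • pd R i f := by
  apply MvPowerSeries.ext; intro m
  rw [coeff_pd, smul_apply', smul_apply', coeff_pd, mul_smul_comm]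

theorem pd_C (i : σ) (c : R) : pd R i (MvPowerSeries.C (σ := σ) (R := R) c) = 0 := by
  classical
  apply MvPowerSeries.ext; intro m
  rw [coeff_pd, MvPowerSeries.coeff_C, if_neg, mul_zero, map_zero]
  intro h
  have := DFunLike.congr_fun h i
  simp at this

theorem pd_one (i : σ) : pd R i (1 : MvPowerSeries σ R) = 0 := by
  rw [← map_one (MvPowerSeries.C (σ := σ) (R := R)), pd_C]

theorem pd_comm (i j : σ) (f : MvPowerSeries σ R) :
    pd R i (pd R j f) = pd R j (pd R i f) := by
  classical
  by_cases hij : i = j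
  · subst hij; rfl
  · apply MvPowerSeries.ext; intro m
    simp only [coeff_pd, Finsupp.add_apply, Finsupp.single_apply]
    rw [if_neg hij, if_neg (Ne.symm hij)]
    rw [add_right_comm m (Finsupp.single i 1) (Finsupp.single j 1)]
    push_cast
    ring

variable [DecidableEq σ]

/-- Leibniz rule helper. -/
theorem sum_antidiagonal_fst (i : σ) (m : σ →₀ ℕ) (F : (σ →₀ ℕ) → (σ →₀ ℕ) → R) :
    ∑ p ∈ Finset.HasAntidiagonal.antidiagonal (m + Finsupp.single i 1), (((p.1 : σ →₀ ℕ) i : ℕ) : R) * F p.1 p.2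
      = ∑ p ∈ Finset.HasAntidiagonal.antidiagonal m, (((p.1 : σ →₀ ℕ) i + 1 : ℕ) : R) * F (p.1 + Finsupp.single i 1) p.2 := by
  set e := Finsupp.single i 1 with he
  set s : Finset ((σ →₀ ℕ) × (σ →₀ ℕ)) :=
    (Finset.HasAntidiagonal.antidiagonal m).image (fun p => (p.1 + e, p.2)) with hs
  have hconv : ∀ p ∈ Finset.HasAntidiagonal.antidiagonal (m + e), p ∉ s →
      ((p.1 i : ℕ) : R) * F p.1 p.2 = 0 := by
    intro p hp hps
    rcases Nat.eq_zero_or_pos (p.1 i) with h0 | hpos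
    · rw [h0]; simp
    · exfalso
      apply hps
      have hle : e ≤ p.1 := by
        rw [he, Finsupp.single_le_iff]; exact hpos
      have hcan : p.1 - e + e = p.1 := tsub_add_cancel_of_le hle
      refine Finset.mem_image.2 ⟨(p.1 - e, p.2), ?_, ?_⟩
      · rw [Finset.HasAntidiagonal.mem_antidiagonal] at hp ⊢
        have h2 : p.1 - e + p.2 + e = m + e := by
          rw [add_right_comm, hcan, hp]
        exact add_right_cancel h2
      · rw [hcan]
  have hsub : s ⊆ Finset.HasAntidiagonal.antidiagonal (m + e) := by
    intro p hp
    rcases Finset.mem_image.1 hp with ⟨q, hq, rfl⟩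
    rw [Finset.HasAntidiagonal.mem_antidiagonal] at hq ⊢
    rw [add_right_comm, hq]
  rw [← Finset.sum_subset hsub hconv, hs, Finset.sum_image]
  · apply Finset.sum_congr rfl
    intro p hp
    congr 2
    simp [he, Finsupp.add_apply, Finsupp.single_eq_same]
  · intro p _ q _ h
    rw [Prod.mk.injEq] at h
    exact Prod.ext (add_right_cancel h.1) h.2

theorem pd_mul (i : σ) (f g : MvPowerSeries σ R) :
    pd R i (f * g) = pd R i f * g + f * pd R i g := by
  apply MvPowerSeries.ext; intro m
  rw [coeff_pd, MvPowerSeries.coeff_mul, Finset.mul_sum, map_add,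
    MvPowerSeries.coeff_mul, MvPowerSeries.coeff_mul]
  have key : ∀ p ∈ Finset.HasAntidiagonal.antidiagonal (m + Finsupp.single i 1),
      ((m i + 1 : ℕ) : R) * (MvPowerSeries.coeff (R := R) p.1 f * MvPowerSeries.coeff (R := R) p.2 g)
        = ((p.1 i : ℕ) : R) * (MvPowerSeries.coeff (R := R) p.1 f * MvPowerSeries.coeff (R := R) p.2 g)
          + ((p.2 i : ℕ) : R) * (MvPowerSeries.coeff (R := R) p.1 f * MvPowerSeries.coeff (R := R) p.2 g) := by
    intro p hp
    rw [Finset.HasAntidiagonal.mem_antidiagonal] at hp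
    have hsum : p.1 i + p.2 i = m i + 1 := by
      have := DFunLike.congr_fun hp i
      simpa [Finsupp.add_apply, Finsupp.single_eq_same] using this
    rw [← hsum]
    push_cast
    ring
  rw [Finset.sum_congr rfl key, Finset.sum_add_distrib]
  congr 1
  · rw [sum_antidiagonal_fst i m
      (fun a b => MvPowerSeries.coeff (R := R) a f * MvPowerSeries.coeff (R := R) b g)]
    apply Finset.sum_congr rfl
    intro p _
    rw [coeff_pd]
    ring
  · rw [Finsupp.sum_antidiagonal_swap (m + Finsupp.single i 1)
      (fun a b => ((b i : ℕ) : R) * (MvPowerSeries.coeff (R := R) a f * MvPowerSeries.coeff (R := R) b g))]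
    rw [sum_antidiagonal_fst i m
      (fun a b => MvPowerSeries.coeff (R := R) b f * MvPowerSeries.coeff (R := R) a g)]
    rw [Finsupp.sum_antidiagonal_swap m
      (fun a b => MvPowerSeries.coeff (R := R) a f * MvPowerSeries.coeff (R := R) b (pd R i g))]
    apply Finset.sum_congr rfl
    intro p _
    rw [coeff_pd]
    ring

theorem pd_pow (i : σ) (f : MvPowerSeries σ R) (k : ℕ) :
    pd R i (f ^ (k + 1)) = (k + 1) • (f ^ k * pd R i f) := by
  induction k with
  | zero => simp [pd_mul]
  | succ k ih =>
    rw [pow_succ, pd_mul, ih, smul_mul_assoc, succ_nsmul]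
    have h1 : f ^ k * pd R i f * f = f ^ (k + 1) * pd R i f := by ring
    rw [h1, pow_succ, succ_nsmul, succ_nsmul]

end CommSemiring

section Rat

variable [CommRing R] [Algebra ℚ R]

theorem nat_cancel {n : ℕ} (hn : n ≠ 0) {x y : R} (h : (n : R) * x = (n : R) * y) : x = y := by
  have hq : ((n : ℚ)) ≠ 0 := Nat.cast_ne_zero.2 hn
  have h1 : (n : ℚ) • x = (n : ℚ) • y := by
    rw [Algebra.smul_def, Algebra.smul_def, map_natCast]; exact h
  calc x = ((n : ℚ)⁻¹ * (n : ℚ)) • x := by rw [inv_mul_cancel₀ hq, one_smul]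
    _ = (n : ℚ)⁻¹ • ((n : ℚ) • x) := mul_smul _ _ _
    _ = (n : ℚ)⁻¹ • ((n : ℚ) • y) := by rw [h1]
    _ = ((n : ℚ)⁻¹ * (n : ℚ)) • y := (mul_smul _ _ _).symm
    _ = y := by rw [inv_mul_cancel₀ hq, one_smul]

theorem pd_sub (i : σ) (f g : MvPowerSeries σ R) :
    pd R i (f - g) = pd R i f - pd R i g := by
  apply MvPowerSeries.ext; intro m
  rw [map_sub, coeff_pd, coeff_pd, coeff_pd, map_sub]
  ring

theorem pd_ext {f g : MvPowerSeries σ R}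
    (h0 : MvPowerSeries.constantCoeff (σ := σ) (R := R) f = MvPowerSeries.constantCoeff (σ := σ) (R := R) g)
    (h : ∀ i, pd R i f = pd R i g) : f = g := by
  apply MvPowerSeries.ext; intro m
  rcases eq_or_ne m 0 with rfl | hm
  · rw [MvPowerSeries.coeff_zero_eq_constantCoeff_apply,
      MvPowerSeries.coeff_zero_eq_constantCoeff_apply, h0]
  · obtain ⟨i, hi⟩ : ∃ i, m i ≠ 0 := by
      by_contra h'
      push_neg at h'
      exact hm (Finsupp.ext fun a => h' a)
    have hle : Finsupp.single i 1 ≤ m := Finsupp.single_le_iff.2 (Nat.one_le_iff_ne_zero.2 hi)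
    have hm' : m - Finsupp.single i 1 + Finsupp.single i 1 = m := tsub_add_cancel_of_le hle
    have hc := congrArg (MvPowerSeries.coeff (R := R) (m - Finsupp.single i 1)) (h i)
    rw [coeff_pd, coeff_pd, hm'] at hc
    exact nat_cancel (Nat.succ_ne_zero _) hc

/-- A formal series `∑ₖ a k • w k`, meaningful when `w` is a "vanishing" family. -/
noncomputable def ser (a : ℕ → ℚ) (w : ℕ → MvPowerSeries σ R) : MvPowerSeries σ R :=
  fun m => ∑ k ∈ Finset.range (deg m + 1), a k • MvPowerSeries.coeff (R := R) m (w k)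

/-- Vanishing family: the `k`-th member has no coefficients below total degree `k`. -/
def Van (w : ℕ → MvPowerSeries σ R) : Prop :=
  ∀ k m, deg m < k → MvPowerSeries.coeff (R := R) m (w k) = 0

theorem coeff_ser (a : ℕ → ℚ) (w : ℕ → MvPowerSeries σ R) (m : σ →₀ ℕ) :
    MvPowerSeries.coeff (R := R) m (ser a w)
      = ∑ k ∈ Finset.range (deg m + 1), a k • MvPowerSeries.coeff (R := R) m (w k) := rfl

theorem coeff_ser_eq {a : ℕ → ℚ} {w : ℕ → MvPowerSeries σ R} (hw : Van w) {m : σ →₀ ℕ}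
    {N : ℕ} (hN : deg m < N) :
    MvPowerSeries.coeff (R := R) m (ser a w) = ∑ k ∈ Finset.range N, a k • MvPowerSeries.coeff (R := R) m (w k) := by
  rw [coeff_ser]
  apply Finset.sum_subset (Finset.range_subset_range.2 hN)
  intro k hk hk'
  rw [Finset.mem_range] at hk hk'
  rw [hw k m (by omega), smul_zero]

theorem van_pow {f : MvPowerSeries σ R} (hf : MvPowerSeries.constantCoeff (σ := σ) (R := R) f = 0) :
    Van (fun k => f ^ k) := by
  classical
  intro k
  induction k with
  | zero => intro m hm; omega
  | succ k ih =>
    intro m hm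
    show MvPowerSeries.coeff (R := R) m (f ^ (k + 1)) = 0
    rw [pow_succ, MvPowerSeries.coeff_mul]
    apply Finset.sum_eq_zero
    intro p hp
    rw [Finset.HasAntidiagonal.mem_antidiagonal] at hp
    by_cases hb : p.2 = 0
    · rw [hb, MvPowerSeries.coeff_zero_eq_constantCoeff_apply, hf, mul_zero]
    · have h2 : deg p.2 ≠ 0 := fun h => hb (deg_eq_zero h)
      have hdeg : deg p.1 + deg p.2 = deg m := by rw [← deg_add, hp]
      have : deg p.1 < k := by omega
      rw [ih p.1 this, zero_mul]

theorem van_mul {w : ℕ → MvPowerSeries σ R} (hw : Van w) (g : MvPowerSeries σ R) :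
    Van (fun k => g * w k) := by
  classical
  intro k m hm
  rw [MvPowerSeries.coeff_mul]
  apply Finset.sum_eq_zero
  intro p hp
  rw [Finset.HasAntidiagonal.mem_antidiagonal] at hp
  have hdeg : deg p.1 + deg p.2 = deg m := by rw [← deg_add, hp]
  rw [hw k p.2 (by omega), mul_zero]

theorem mul_ser {w : ℕ → MvPowerSeries σ R} (hw : Van w) (a : ℕ → ℚ) (g : MvPowerSeries σ R) :
    g * ser a w = ser a fun k => g * w k := by
  classical
  apply MvPowerSeries.ext; intro m
  rw [MvPowerSeries.coeff_mul, coeff_ser]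
  have step1 : ∀ p ∈ Finset.HasAntidiagonal.antidiagonal m,
      MvPowerSeries.coeff (R := R) p.1 g * MvPowerSeries.coeff (R := R) p.2 (ser a w)
        = ∑ k ∈ Finset.range (deg m + 1),
            a k • (MvPowerSeries.coeff (R := R) p.1 g * MvPowerSeries.coeff (R := R) p.2 (w k)) := by
    intro p hp
    rw [Finset.HasAntidiagonal.mem_antidiagonal] at hp
    have hdeg : deg p.1 + deg p.2 = deg m := by rw [← deg_add, hp]
    have hle : deg p.2 < deg m + 1 := by omega
    rw [coeff_ser_eq hw hle, Finset.mul_sum]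
    exact Finset.sum_congr rfl fun k _ => mul_smul_comm _ _ _
  rw [Finset.sum_congr rfl step1, Finset.sum_comm]
  apply Finset.sum_congr rfl
  intro k _
  rw [MvPowerSeries.coeff_mul, Finset.smul_sum]

theorem coeff_pd_ser {w : ℕ → MvPowerSeries σ R} (hw : Van w) (a : ℕ → ℚ) (i : σ) (m : σ →₀ ℕ) :
    MvPowerSeries.coeff (R := R) m (pd R i (ser a w))
      = ∑ k ∈ Finset.range (deg m + 2), a k • MvPowerSeries.coeff (R := R) m (pd R i (w k)) := by
  rw [coeff_pd]
  have hlt : deg (m + Finsupp.single i 1) < deg m + 2 := by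
    rw [deg_add, deg_single]; omega
  rw [coeff_ser_eq hw hlt, Finset.mul_sum]
  exact Finset.sum_congr rfl fun k _ => by rw [coeff_pd, mul_smul_comm]

/-- Formal exponential of a power series with zero constant term. -/
noncomputable def Exp (f : MvPowerSeries σ R) : MvPowerSeries σ R :=
  ser (fun k => ((k.factorial : ℚ))⁻¹) (fun k => f ^ k)

theorem Exp_def (f : MvPowerSeries σ R) :
    Exp f = ser (fun k => ((k.factorial : ℚ))⁻¹) (fun k => f ^ k) := rfl

/-- Formal `log(1+u)` of a power series `u` with zero constant term. -/
noncomputable def Log1p (u : MvPowerSeries σ R) : MvPowerSeries σ R :=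
  ser (fun k => (-1 : ℚ) ^ (k + 1) / (k : ℚ)) (fun k => u ^ k)

theorem Log1p_def (u : MvPowerSeries σ R) :
    Log1p u = ser (fun k => (-1 : ℚ) ^ (k + 1) / (k : ℚ)) (fun k => u ^ k) := rfl

theorem constantCoeff_Exp (f : MvPowerSeries σ R) :
    MvPowerSeries.constantCoeff (σ := σ) (R := R) (Exp f) = 1 := by
  rw [← MvPowerSeries.coeff_zero_eq_constantCoeff_apply, Exp_def, coeff_ser]
  simp

theorem constantCoeff_Log1p (u : MvPowerSeries σ R) :
    MvPowerSeries.constantCoeff (σ := σ) (R := R) (Log1p u) = 0 := by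
  rw [← MvPowerSeries.coeff_zero_eq_constantCoeff_apply, Log1p_def, coeff_ser]
  simp

theorem isUnit_Exp (f : MvPowerSeries σ R) : IsUnit (Exp f) := by
  rw [MvPowerSeries.isUnit_iff_constantCoeff, constantCoeff_Exp]
  exact isUnit_one

theorem pd_Exp {f : MvPowerSeries σ R} (hf : MvPowerSeries.constantCoeff (σ := σ) (R := R) f = 0) (i : σ) :
    pd R i (Exp f) = pd R i f * Exp f := by
  classical
  have hvan := van_pow hf
  apply MvPowerSeries.ext; intro m
  rw [Exp_def, mul_ser hvan _ (pd R i f), coeff_pd_ser hvan, coeff_ser, Finset.sum_range_succ']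
  have h0 : ((0).factorial : ℚ)⁻¹ • MvPowerSeries.coeff (R := R) m (pd R i ((fun k => f ^ k) 0)) = 0 := by
    simp [pd_one]
  rw [h0, add_zero]
  apply Finset.sum_congr rfl
  intro k _
  show (((k+1).factorial : ℚ))⁻¹ • MvPowerSeries.coeff (R := R) m (pd R i (f ^ (k+1))) = _
  rw [pd_pow, map_nsmul, ← Nat.cast_smul_eq_nsmul ℚ, ← mul_smul]
  have hfac : (((k+1).factorial : ℚ))⁻¹ * ((k+1 : ℕ) : ℚ) = ((k.factorial : ℚ))⁻¹ := by
    rw [Nat.factorial_succ]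
    push_cast
    rw [mul_inv]
    field_simp
  rw [hfac]
  congr 1
  rw [mul_comm]

theorem pd_Log1p {u : MvPowerSeries σ R} (hu : MvPowerSeries.constantCoeff (σ := σ) (R := R) u = 0) (i : σ) :
    pd R i (Log1p u) = ser (fun k => (-1 : ℚ) ^ k) (fun k => u ^ k * pd R i u) := by
  classical
  have hvan := van_pow hu
  apply MvPowerSeries.ext; intro m
  rw [Log1p_def, coeff_pd_ser hvan, coeff_ser, Finset.sum_range_succ']
  have h0 : ((-1 : ℚ) ^ (0 + 1) / ((0 : ℕ) : ℚ)) • MvPowerSeries.coeff (R := R) m (pd R i ((fun k => u ^ k) 0)) = 0 := by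
    simp
  rw [h0, add_zero]
  apply Finset.sum_congr rfl
  intro k _
  show ((-1 : ℚ) ^ (k + 1 + 1) / ((k + 1 : ℕ) : ℚ)) • MvPowerSeries.coeff (R := R) m (pd R i (u ^ (k+1))) = _
  rw [pd_pow, map_nsmul, ← Nat.cast_smul_eq_nsmul ℚ, ← mul_smul]
  congr 1
  have hk : ((k + 1 : ℕ) : ℚ) ≠ 0 := by positivity
  field_simp
  ring

theorem one_add_mul_pd_Log1p {u : MvPowerSeries σ R}
    (hu : MvPowerSeries.constantCoeff (σ := σ) (R := R) u = 0) (i : σ) :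
    (1 + u) * pd R i (Log1p u) = pd R i u := by
  classical
  have hw' : Van (fun k => u ^ k * pd R i u) := by
    have h := van_mul (van_pow hu) (pd R i u)
    intro k m hm
    show MvPowerSeries.coeff (R := R) m (u ^ k * pd R i u) = 0
    rw [mul_comm]
    exact h k m hm
  rw [pd_Log1p hu, add_mul, one_mul, mul_ser hw']
  apply MvPowerSeries.ext; intro m
  simp only [map_add, coeff_ser]
  rw [← Finset.sum_add_distrib]
  have step : ∀ k ∈ Finset.range (deg m + 1),
      (-1 : ℚ) ^ k • MvPowerSeries.coeff (R := R) m (u ^ k * pd R i u)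
        + (-1 : ℚ) ^ k • MvPowerSeries.coeff (R := R) m (u * (u ^ k * pd R i u))
      = (fun k => (-1 : ℚ) ^ k • MvPowerSeries.coeff (R := R) m (u ^ k * pd R i u)) k
        - (fun k => (-1 : ℚ) ^ k • MvPowerSeries.coeff (R := R) m (u ^ k * pd R i u)) (k + 1) := by
    intro k _
    simp only []
    have harg : u * (u ^ k * pd R i u) = u ^ (k + 1) * pd R i u := by ring
    rw [harg, sub_eq_add_neg]
    congr 1
    have hsc : ((-1 : ℚ)) ^ (k + 1) = (-1 : ℚ) ^ k * (-1) := pow_succ _ _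
    rw [hsc, mul_smul, neg_one_smul, smul_neg, neg_neg]
  rw [Finset.sum_congr rfl step, Finset.sum_range_sub']
  have hend : (-1 : ℚ) ^ (deg m + 1) • MvPowerSeries.coeff (R := R) m (u ^ (deg m + 1) * pd R i u) = 0 := by
    rw [hw' (deg m + 1) m (by omega), smul_zero]
  rw [hend, sub_zero, pow_zero, one_smul, pow_zero, one_mul]

theorem Log1p_Exp {f : MvPowerSeries σ R} (hf : MvPowerSeries.constantCoeff (σ := σ) (R := R) f = 0) :
    Log1p (Exp f - 1) = f := by
  set u := Exp f - 1 with hu_def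
  have hu : MvPowerSeries.constantCoeff (σ := σ) (R := R) u = 0 := by
    rw [hu_def, map_sub, constantCoeff_Exp, map_one, sub_self]
  apply pd_ext
  · rw [constantCoeff_Log1p, hf]
  · intro i
    have h9 := one_add_mul_pd_Log1p hu i
    have h1u : (1 : MvPowerSeries σ R) + u = Exp f := by rw [hu_def]; ring
    have h2 : pd R i u = pd R i (Exp f) := by
      rw [hu_def, pd_sub, pd_one, sub_zero]
    rw [h1u, h2, pd_Exp hf] at h9
    refine (isUnit_Exp f).mul_left_cancel ?_
    rw [h9, mul_comm]

end Rat

section Sum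

variable {r : ℕ} [CommRing R] [Algebra ℚ R]

/-- the `x`-part of a monomial -/
noncomputable def xPart (m : (Fin r ⊕ SVar r) →₀ ℕ) : Fin r →₀ ℕ :=
  Finsupp.comapDomain Sum.inl m Sum.inl_injective.injOn

/-- the `s`-part of a monomial -/
noncomputable def sPart (m : (Fin r ⊕ SVar r) →₀ ℕ) : SVar r →₀ ℕ :=
  Finsupp.comapDomain Sum.inr m Sum.inr_injective.injOn

theorem xPart_apply (m : (Fin r ⊕ SVar r) →₀ ℕ) (i : Fin r) : xPart m i = m (Sum.inl i) := rfl

theorem sPart_apply (m : (Fin r ⊕ SVar r) →₀ ℕ) (s : SVar r) : sPart m s = m (Sum.inr s) := rfl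

theorem xPart_add (m n : (Fin r ⊕ SVar r) →₀ ℕ) : xPart (m + n) = xPart m + xPart n :=
  Finsupp.ext fun a => by
    rw [Finsupp.add_apply, xPart_apply, xPart_apply, xPart_apply, Finsupp.add_apply]

theorem sPart_add (m n : (Fin r ⊕ SVar r) →₀ ℕ) : sPart (m + n) = sPart m + sPart n :=
  Finsupp.ext fun a => by
    rw [Finsupp.add_apply, sPart_apply, sPart_apply, sPart_apply, Finsupp.add_apply]

theorem xPart_single_inl (i : Fin r) (n : ℕ) :
    xPart (Finsupp.single (Sum.inl i : Fin r ⊕ SVar r) n) = Finsupp.single i n :=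
  Finsupp.ext fun a => by
    rw [xPart_apply, Finsupp.single_apply, Finsupp.single_apply]
    simp [Sum.inl.injEq]

theorem xPart_single_inr (s : SVar r) (n : ℕ) :
    xPart (Finsupp.single (Sum.inr s : Fin r ⊕ SVar r) n) = 0 :=
  Finsupp.ext fun a => by
    rw [xPart_apply, Finsupp.single_apply]
    simp

theorem sPart_single_inl (i : Fin r) (n : ℕ) :
    sPart (Finsupp.single (Sum.inl i : Fin r ⊕ SVar r) n) = 0 :=
  Finsupp.ext fun a => by
    rw [sPart_apply, Finsupp.single_apply]
    simp

theorem sPart_single_inr (s : SVar r) (n : ℕ) :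
    sPart (Finsupp.single (Sum.inr s : Fin r ⊕ SVar r) n) = Finsupp.single s n :=
  Finsupp.ext fun a => by
    rw [sPart_apply, Finsupp.single_apply, Finsupp.single_apply]
    simp [Sum.inr.injEq]

@[simp] theorem xPart_zero : xPart (0 : (Fin r ⊕ SVar r) →₀ ℕ) = 0 :=
  Finsupp.ext fun a => rfl

@[simp] theorem sPart_zero : sPart (0 : (Fin r ⊕ SVar r) →₀ ℕ) = 0 :=
  Finsupp.ext fun a => rfl

theorem xPart_mapDomain (p : Fin r →₀ ℕ) : xPart (Finsupp.mapDomain Sum.inl p) = p :=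
  Finsupp.ext fun a => by
    rw [xPart_apply, Finsupp.mapDomain_apply Sum.inl_injective]

theorem sPart_mapDomain (p : Fin r →₀ ℕ) : sPart (Finsupp.mapDomain Sum.inl p) = 0 :=
  Finsupp.ext fun a => by
    rw [sPart_apply, Finsupp.mapDomain_notin_range]
    · rfl
    · rintro ⟨x, hx⟩
      exact Sum.inl_ne_inr hx

theorem eq_mapDomain_of_sPart_zero {m : (Fin r ⊕ SVar r) →₀ ℕ} (h : sPart m = 0) :
    m = Finsupp.mapDomain Sum.inl (xPart m) := by
  apply Finsupp.ext
  intro a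
  cases a with
  | inl i => rw [Finsupp.mapDomain_apply Sum.inl_injective, xPart_apply]
  | inr s =>
    rw [Finsupp.mapDomain_notin_range]
    · have := DFunLike.congr_fun h s
      rw [sPart_apply] at this
      exact this
    · rintro ⟨x, hx⟩
      exact Sum.inl_ne_inr hx

theorem mapDomain_inl_eq_zero_iff {m : Fin r →₀ ℕ} :
    Finsupp.mapDomain (Sum.inl : Fin r → Fin r ⊕ SVar r) m = 0 ↔ m = 0 := by
  constructor
  · intro h
    have := xPart_mapDomain (r := r) m
    rw [h, xPart_zero] at this
    exact this.symm
  · rintro rfl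
    exact Finsupp.mapDomain_zero

theorem deg_mapDomain (p : Fin r →₀ ℕ) :
    deg (Finsupp.mapDomain (Sum.inl : Fin r → Fin r ⊕ SVar r) p) = deg p :=
  Finsupp.sum_mapDomain_index (fun _ => rfl) (fun _ _ _ => rfl)

theorem mapDomain_inl_fst_eq_of_add {a b : (Fin r ⊕ SVar r) →₀ ℕ} {m : Fin r →₀ ℕ}
    (h : a + b = Finsupp.mapDomain Sum.inl m) :
    Finsupp.mapDomain Sum.inl (xPart a) = a := by
  apply Finsupp.ext
  intro t
  cases t with
  | inl i => rw [Finsupp.mapDomain_apply Sum.inl_injective, xPart_apply]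
  | inr s =>
    rw [Finsupp.mapDomain_notin_range]
    · have h1 := DFunLike.congr_fun h (Sum.inr s)
      rw [Finsupp.add_apply, Finsupp.mapDomain_notin_range] at h1
      · omega
      · rintro ⟨x, hx⟩; exact Sum.inl_ne_inr hx
    · rintro ⟨x, hx⟩; exact Sum.inl_ne_inr hx

/- coefficients of `resS0` -/
theorem resS0_coeff (f : MvPowerSeries (Fin r ⊕ SVar r) R) (m : Fin r →₀ ℕ) :
    MvPowerSeries.coeff (R := R) m (resS0 f) = MvPowerSeries.coeff (R := R) (Finsupp.mapDomain Sum.inl m) f := rfl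

theorem resS0_add (f g : MvPowerSeries (Fin r ⊕ SVar r) R) :
    resS0 (f + g) = resS0 f + resS0 g := by
  apply MvPowerSeries.ext; intro m
  rw [map_add, resS0_coeff, map_add, resS0_coeff, resS0_coeff]

theorem resS0_sub (f g : MvPowerSeries (Fin r ⊕ SVar r) R) :
    resS0 (f - g) = resS0 f - resS0 g := by
  apply MvPowerSeries.ext; intro m
  rw [map_sub, resS0_coeff, map_sub, resS0_coeff, resS0_coeff]

theorem resS0_C (c : R) :
    resS0 (MvPowerSeries.C (σ := Fin r ⊕ SVar r) (R := R) c) = MvPowerSeries.C (σ := Fin r) (R := R) c := by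
  classical
  apply MvPowerSeries.ext; intro m
  rw [resS0_coeff, MvPowerSeries.coeff_C, MvPowerSeries.coeff_C]
  simp [mapDomain_inl_eq_zero_iff]

theorem resS0_one : resS0 (1 : MvPowerSeries (Fin r ⊕ SVar r) R) = 1 := by
  rw [← map_one (MvPowerSeries.C (σ := Fin r ⊕ SVar r) (R := R)), resS0_C, map_one]

theorem resS0_mul (f g : MvPowerSeries (Fin r ⊕ SVar r) R) :
    resS0 (f * g) = resS0 f * resS0 g := by
  classical
  apply MvPowerSeries.ext; intro m
  rw [resS0_coeff, MvPowerSeries.coeff_mul, MvPowerSeries.coeff_mul]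
  symm
  apply Finset.sum_nbij'
    (i := fun p => (Finsupp.mapDomain Sum.inl p.1, Finsupp.mapDomain Sum.inl p.2))
    (j := fun p => (xPart p.1, xPart p.2))
  · intro p hp
    rw [Finset.HasAntidiagonal.mem_antidiagonal] at hp ⊢
    rw [← Finsupp.mapDomain_add, hp]
  · intro p hp
    rw [Finset.HasAntidiagonal.mem_antidiagonal] at hp ⊢
    have := congrArg xPart hp
    rw [xPart_add, xPart_mapDomain] at this
    exact this
  · intro p _
    simp only [xPart_mapDomain]
  · intro p hp
    rw [Finset.HasAntidiagonal.mem_antidiagonal] at hp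
    have h1 := mapDomain_inl_fst_eq_of_add hp
    have h2 : Finsupp.mapDomain Sum.inl (xPart p.2) = p.2 := by
      rw [add_comm] at hp
      exact mapDomain_inl_fst_eq_of_add hp
    simp only [h1, h2]
  · intro p _
    rw [resS0_coeff, resS0_coeff]

theorem resS0_pow (f : MvPowerSeries (Fin r ⊕ SVar r) R) (k : ℕ) :
    resS0 (f ^ k) = (resS0 f) ^ k := by
  induction k with
  | zero => rw [pow_zero, pow_zero, resS0_one]
  | succ k ih => rw [pow_succ, pow_succ, resS0_mul, ih]

theorem resS0_ser (a : ℕ → ℚ) (w : ℕ → MvPowerSeries (Fin r ⊕ SVar r) R) :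
    resS0 (ser a w) = ser a fun k => resS0 (w k) := by
  apply MvPowerSeries.ext; intro m
  rw [resS0_coeff, coeff_ser, coeff_ser, deg_mapDomain]
  apply Finset.sum_congr rfl
  intro k _
  rw [resS0_coeff]

theorem resS0_Log1p (u : MvPowerSeries (Fin r ⊕ SVar r) R) :
    resS0 (Log1p u) = Log1p (resS0 u) := by
  rw [Log1p_def, Log1p_def, resS0_ser]
  have h : (fun k => resS0 (u ^ k)) = fun k => (resS0 u) ^ k := funext fun k => resS0_pow u k
  rw [h]

/-! ### The assembled series over `Fin r ⊕ SVar r` from a family of `x`-series -/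

/-- assemble a family of series indexed by `s`-monomials into a single series -/
noncomputable def asm (F : (SVar r →₀ ℕ) → MvPowerSeries (Fin r) R) :
    MvPowerSeries (Fin r ⊕ SVar r) R :=
  fun m => MvPowerSeries.coeff (R := R) (xPart m) (F (sPart m))

theorem coeff_asm (F : (SVar r →₀ ℕ) → MvPowerSeries (Fin r) R) (m : (Fin r ⊕ SVar r) →₀ ℕ) :
    MvPowerSeries.coeff (R := R) m (asm F) = MvPowerSeries.coeff (R := R) (xPart m) (F (sPart m)) := rfl

theorem pd_inl_asm (F : (SVar r →₀ ℕ) → MvPowerSeries (Fin r) R) (i : Fin r) :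
    pd R (Sum.inl i) (asm F) = asm fun α => pd R i (F α) := by
  apply MvPowerSeries.ext; intro m
  rw [coeff_pd, coeff_asm, coeff_asm, coeff_pd]
  rw [xPart_add, xPart_single_inl, sPart_add, sPart_single_inl, add_zero, xPart_apply]

theorem pd_inr_asm (F : (SVar r →₀ ℕ) → MvPowerSeries (Fin r) R) (s : SVar r) :
    pd R (Sum.inr s) (asm F) = asm fun α => ((α s + 1 : ℕ) : R) • F (α + Finsupp.single s 1) := by
  apply MvPowerSeries.ext; intro m
  rw [coeff_pd, coeff_asm, coeff_asm, MvPowerSeries.coeff_smul]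
  rw [xPart_add, xPart_single_inr, add_zero, sPart_add, sPart_single_inr, sPart_apply]

theorem resS0_asm (F : (SVar r →₀ ℕ) → MvPowerSeries (Fin r) R) :
    resS0 (asm F) = F 0 := by
  apply MvPowerSeries.ext; intro m
  rw [resS0_coeff, coeff_asm, xPart_mapDomain, sPart_mapDomain]

theorem C_mul_asm (c : R) (F : (SVar r →₀ ℕ) → MvPowerSeries (Fin r) R) :
    MvPowerSeries.C (σ := Fin r ⊕ SVar r) (R := R) c * asm F
      = asm fun α => MvPowerSeries.C (σ := Fin r) (R := R) c * F α := by
  apply MvPowerSeries.ext; intro m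
  rw [MvPowerSeries.coeff_C_mul, coeff_asm, coeff_asm, MvPowerSeries.coeff_C_mul]

theorem smul_asm (q : ℚ) (F : (SVar r →₀ ℕ) → MvPowerSeries (Fin r) R) :
    q • asm F = asm fun α => q • F α := by
  apply MvPowerSeries.ext; intro m
  rw [smul_apply', coeff_asm, coeff_asm, smul_apply']

/-! ### The differential operators and the heat flow -/

/-- second-order operator `∂_i ∂_j` attached to an `s`-variable -/
noncomputable def Dq (s : SVar r) (g : MvPowerSeries (Fin r) R) : MvPowerSeries (Fin r) R :=
  pd R s.1.1 (pd R s.1.2 g)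

instance : LeftCommutative (Dq (r := r) (R := R)) := by
  constructor
  intro s t g
  show pd R s.1.1 (pd R s.1.2 (pd R t.1.1 (pd R t.1.2 g)))
    = pd R t.1.1 (pd R t.1.2 (pd R s.1.1 (pd R s.1.2 g)))
  calc pd R s.1.1 (pd R s.1.2 (pd R t.1.1 (pd R t.1.2 g)))
      = pd R s.1.1 (pd R t.1.1 (pd R s.1.2 (pd R t.1.2 g))) :=
        congrArg (pd R s.1.1) (pd_comm _ _ _)
    _ = pd R t.1.1 (pd R s.1.1 (pd R s.1.2 (pd R t.1.2 g))) := pd_comm _ _ _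
    _ = pd R t.1.1 (pd R s.1.1 (pd R t.1.2 (pd R s.1.2 g))) :=
        congrArg (pd R t.1.1) (congrArg (pd R s.1.1) (pd_comm _ _ _))
    _ = pd R t.1.1 (pd R t.1.2 (pd R s.1.1 (pd R s.1.2 g))) :=
        congrArg (pd R t.1.1) (pd_comm _ _ _)

/-- iterated operator `∏ (∂_i ∂_j)^{α_s}` -/
noncomputable def Dop (α : SVar r →₀ ℕ) (g : MvPowerSeries (Fin r) R) :
    MvPowerSeries (Fin r) R :=
  Multiset.foldr Dq g α.toMultiset

theorem Dop_zero (g : MvPowerSeries (Fin r) R) : Dop 0 g = g := by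
  show Multiset.foldr Dq g (Finsupp.toMultiset 0) = g
  rw [Finsupp.toMultiset_zero, Multiset.foldr_zero]

theorem Dop_add_single (α : SVar r →₀ ℕ) (s : SVar r) (g : MvPowerSeries (Fin r) R) :
    Dop (α + Finsupp.single s 1) g = Dq s (Dop α g) := by
  show Multiset.foldr Dq g (Finsupp.toMultiset (α + Finsupp.single s 1)) = _
  rw [Finsupp.toMultiset_add, Finsupp.toMultiset_single, one_nsmul, add_comm,
    Multiset.singleton_add, Multiset.foldr_cons]
  rfl

/-- the symmetry factor `{ij}!` -/
def fct (s : SVar r) : ℚ := if s.1.1 = s.1.2 then 2 else 1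

theorem fct_ne_zero (s : SVar r) : fct s ≠ 0 := by
  unfold fct; split <;> norm_num

/-- the combinatorial coefficient of the heat flow -/
noncomputable def qc (α : SVar r →₀ ℕ) : ℚ :=
  ∏ s : SVar r, ((fct s) ^ (α s) * ((α s).factorial : ℚ))⁻¹

theorem qc_zero : qc (0 : SVar r →₀ ℕ) = 1 := by
  unfold qc
  simp

theorem qc_succ (α : SVar r →₀ ℕ) (s : SVar r) :
    qc (α + Finsupp.single s 1) = (fct s * ((α s : ℚ) + 1))⁻¹ * qc α := by
  classical
  unfold qc
  rw [Finset.prod_eq_mul_prod_sdiff_singleton_of_mem (Finset.mem_univ s),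
      Finset.prod_eq_mul_prod_sdiff_singleton_of_mem (Finset.mem_univ s)
        (fun t => ((fct t) ^ (α t) * ((α t).factorial : ℚ))⁻¹)]
  have hoff : ∀ t ∈ Finset.univ \ {s},
      ((fct t) ^ (((α + Finsupp.single s 1 : SVar r →₀ ℕ)) t)
          * ((((α + Finsupp.single s 1 : SVar r →₀ ℕ)) t).factorial : ℚ))⁻¹
        = ((fct t) ^ (α t) * ((α t).factorial : ℚ))⁻¹ := by
    intro t ht
    rw [Finset.mem_sdiff, Finset.mem_singleton] at ht
    rw [Finsupp.add_apply, Finsupp.single_apply, if_neg (Ne.symm ht.2), add_zero]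
  rw [Finset.prod_congr rfl hoff]
  have hs : ((α + Finsupp.single s 1 : SVar r →₀ ℕ)) s = α s + 1 := by
    rw [Finsupp.add_apply, Finsupp.single_eq_same]
  rw [hs]
  have hfac : ((fct s) ^ (α s + 1) * (((α s) + 1).factorial : ℚ))⁻¹
      = (fct s * ((α s : ℚ) + 1))⁻¹ * ((fct s) ^ (α s) * ((α s).factorial : ℚ))⁻¹ := by
    rw [pow_succ, Nat.factorial_succ]
    push_cast
    rw [mul_inv, mul_inv, mul_inv, mul_inv]
    ring
  rw [hfac]
  ring

theorem smul_eq_C_mul' (c : R) (f : MvPowerSeries (Fin r) R) :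
    c • f = MvPowerSeries.C (σ := Fin r) (R := R) c * f := by
  apply MvPowerSeries.ext; intro m
  rw [MvPowerSeries.coeff_smul, MvPowerSeries.coeff_C_mul]

theorem pd_C_mul (i : Fin r) (c : R) (f : MvPowerSeries (Fin r) R) :
    pd R i (MvPowerSeries.C (σ := Fin r) (R := R) c * f) = MvPowerSeries.C (σ := Fin r) (R := R) c * pd R i f := by
  rw [pd_mul, pd_C, zero_mul, zero_add]

/-- the heat-kernel family -/
noncomputable def Fam (hbar : R) (Φ₀ : MvPowerSeries (Fin r) R) (α : SVar r →₀ ℕ) :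
    MvPowerSeries (Fin r) R :=
  qc α • (MvPowerSeries.C (σ := Fin r) (R := R) (hbar ^ deg α) * Dop α Φ₀)

/-- the heat-kernel evolution of `Φ₀` -/
noncomputable def Phi (hbar : R) (Φ₀ : MvPowerSeries (Fin r) R) :
    MvPowerSeries (Fin r ⊕ SVar r) R :=
  asm (Fam hbar Φ₀)

theorem Fam_zero (hbar : R) (Φ₀ : MvPowerSeries (Fin r) R) : Fam hbar Φ₀ 0 = Φ₀ := by
  unfold Fam
  rw [qc_zero, Dop_zero, deg_zero, pow_zero, map_one, one_mul, one_smul]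

theorem resS0_Phi (hbar : R) (Φ₀ : MvPowerSeries (Fin r) R) : resS0 (Phi hbar Φ₀) = Φ₀ := by
  rw [Phi, resS0_asm, Fam_zero]

theorem constantCoeff_Phi (hbar : R) (Φ₀ : MvPowerSeries (Fin r) R) :
    MvPowerSeries.constantCoeff (R := R) (Phi hbar Φ₀) = MvPowerSeries.constantCoeff (R := R) Φ₀ := by
  rw [← MvPowerSeries.coeff_zero_eq_constantCoeff_apply,
    ← MvPowerSeries.coeff_zero_eq_constantCoeff_apply]
  rw [Phi, coeff_asm, xPart_zero, sPart_zero, Fam_zero]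

theorem heat (hbar : R) (Φ₀ : MvPowerSeries (Fin r) R) (s : SVar r) :
    pd R (Sum.inr s) (Phi hbar Φ₀)
      = (fct s)⁻¹ • (MvPowerSeries.C (σ := Fin r ⊕ SVar r) (R := R) hbar
          * pd R (Sum.inl s.1.1) (pd R (Sum.inl s.1.2) (Phi hbar Φ₀))) := by
  rw [Phi, pd_inr_asm, pd_inl_asm, pd_inl_asm, C_mul_asm, smul_asm]
  refine congrArg asm ?_
  funext α
  show ((α s + 1 : ℕ) : R) • Fam hbar Φ₀ (α + Finsupp.single s 1)
    = (fct s)⁻¹ • (MvPowerSeries.C (σ := Fin r) (R := R) hbar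
        * pd R s.1.1 (pd R s.1.2 (Fam hbar Φ₀ α)))
  have hL : Fam hbar Φ₀ (α + Finsupp.single s 1)
      = qc (α + Finsupp.single s 1) • (MvPowerSeries.C (σ := Fin r) (R := R) (hbar ^ (deg α + 1))
          * pd R s.1.1 (pd R s.1.2 (Dop α Φ₀))) := by
    show qc _ • (MvPowerSeries.C (σ := Fin r) (R := R) (hbar ^ deg (α + Finsupp.single s 1))
        * Dop (α + Finsupp.single s 1) Φ₀) = _
    rw [deg_add, deg_single, Dop_add_single]
    rfl
  have hR : pd R s.1.1 (pd R s.1.2 (Fam hbar Φ₀ α))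
      = qc α • (MvPowerSeries.C (σ := Fin r) (R := R) (hbar ^ deg α)
          * pd R s.1.1 (pd R s.1.2 (Dop α Φ₀))) := by
    show pd R s.1.1 (pd R s.1.2 (qc α •
        (MvPowerSeries.C (σ := Fin r) (R := R) (hbar ^ deg α) * Dop α Φ₀))) = _
    rw [pd_smul, pd_C_mul, pd_smul, pd_C_mul]
  rw [hL, hR]
  rw [mul_smul_comm, smul_smul]
  rw [Nat.cast_smul_eq_nsmul R (α s + 1), ← Nat.cast_smul_eq_nsmul ℚ (α s + 1), smul_smul]
  rw [← mul_assoc (MvPowerSeries.C (σ := Fin r) (R := R) hbar), ← map_mul, ← pow_succ']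
  congr 1
  rw [qc_succ]
  push_cast
  have hne : ((α s : ℚ) + 1) ≠ 0 := by positivity
  have hfne := fct_ne_zero s
  field_simp

end Sum

section Main

variable {r : ℕ} [CommRing R] [Algebra ℚ R]

theorem sIdx_eq (s : SVar r) : sIdx s.1.1 s.1.2 = s := by
  unfold sIdx
  refine (dif_pos s.2).trans ?_
  exact Subtype.ext rfl

theorem uniq (hbar : R) (U : MvPowerSeries (Fin r) R)
    {Ψ₁ Ψ₂ : MvPowerSeries (Fin r ⊕ SVar r) R}
    (e1 : ∀ i j : Fin r, i ≤ j →
      pd R (Sum.inr (sIdx i j)) Ψ₁ =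
        (if i = j then (2 : ℚ)⁻¹ else 1) •
          (MvPowerSeries.C (σ := Fin r ⊕ SVar r) (R := R) hbar *
            (pd R (Sum.inl i) (pd R (Sum.inl j) Ψ₁) +
              pd R (Sum.inl i) Ψ₁ * pd R (Sum.inl j) Ψ₁)))
    (r1 : resS0 Ψ₁ = U)
    (e2 : ∀ i j : Fin r, i ≤ j →
      pd R (Sum.inr (sIdx i j)) Ψ₂ =
        (if i = j then (2 : ℚ)⁻¹ else 1) •
          (MvPowerSeries.C (σ := Fin r ⊕ SVar r) (R := R) hbar *
            (pd R (Sum.inl i) (pd R (Sum.inl j) Ψ₂) +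
              pd R (Sum.inl i) Ψ₂ * pd R (Sum.inl j) Ψ₂)))
    (r2 : resS0 Ψ₂ = U) : Ψ₁ = Ψ₂ := by
  classical
  suffices H : ∀ n (m : (Fin r ⊕ SVar r) →₀ ℕ), deg (sPart m) = n →
      MvPowerSeries.coeff (R := R) m Ψ₁ = MvPowerSeries.coeff (R := R) m Ψ₂ by
    apply MvPowerSeries.ext
    intro m
    exact H _ m rfl
  intro n
  induction n using Nat.strong_induction_on with
  | _ n IH =>
  intro m hm
  rcases eq_or_ne (sPart m) 0 with h0 | hne
  · have hmap : m = Finsupp.mapDomain Sum.inl (xPart m) := eq_mapDomain_of_sPart_zero h0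
    calc MvPowerSeries.coeff (R := R) m Ψ₁
        = MvPowerSeries.coeff (R := R) (xPart m) U := by rw [← r1, resS0_coeff, ← hmap]
      _ = MvPowerSeries.coeff (R := R) m Ψ₂ := by rw [← r2, resS0_coeff, ← hmap]
  · obtain ⟨s, hs⟩ : ∃ s, sPart m s ≠ 0 := by
      by_contra h'
      push_neg at h'
      exact hne (Finsupp.ext h')
    have hij : s.1.1 ≤ s.1.2 := s.2
    have E1 := e1 s.1.1 s.1.2 hij
    have E2 := e2 s.1.1 s.1.2 hij
    rw [sIdx_eq s] at E1 E2
    set i : Fin r := s.1.1 with hidef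
    set j : Fin r := s.1.2 with hjdef
    set m' := m - Finsupp.single (Sum.inr s : Fin r ⊕ SVar r) 1 with hm'def
    have hle : Finsupp.single (Sum.inr s : Fin r ⊕ SVar r) 1 ≤ m := by
      rw [Finsupp.single_le_iff]
      have : m (Sum.inr s) = sPart m s := rfl
      omega
    have hm'add : m' + Finsupp.single (Sum.inr s : Fin r ⊕ SVar r) 1 = m :=
      tsub_add_cancel_of_le hle
    have hsm : sPart m = sPart m' + Finsupp.single s 1 := by
      rw [← hm'add, sPart_add, sPart_single_inr]
    have hdeg' : deg (sPart m') + 1 = n := by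
      rw [← hm, hsm, deg_add, deg_single]
    -- key step: the coefficients of the two right-hand sides at `m'` agree
    have hA : MvPowerSeries.coeff (R := R) m' (pd R (Sum.inl i) (pd R (Sum.inl j) Ψ₁))
        = MvPowerSeries.coeff (R := R) m' (pd R (Sum.inl i) (pd R (Sum.inl j) Ψ₂)) := by
      rw [coeff_pd, coeff_pd, coeff_pd, coeff_pd]
      have hsp : deg (sPart (m' + Finsupp.single (Sum.inl i : Fin r ⊕ SVar r) 1
          + Finsupp.single (Sum.inl j : Fin r ⊕ SVar r) 1)) = deg (sPart m') := by
        rw [sPart_add, sPart_add, sPart_single_inl, sPart_single_inl, add_zero, add_zero]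
      rw [IH (deg (sPart m')) (by omega) _ hsp]
    have hB : MvPowerSeries.coeff (R := R) m' (pd R (Sum.inl i) Ψ₁ * pd R (Sum.inl j) Ψ₁)
        = MvPowerSeries.coeff (R := R) m' (pd R (Sum.inl i) Ψ₂ * pd R (Sum.inl j) Ψ₂) := by
      rw [MvPowerSeries.coeff_mul, MvPowerSeries.coeff_mul]
      apply Finset.sum_congr rfl
      intro p hp
      rw [Finset.HasAntidiagonal.mem_antidiagonal] at hp
      have hps : sPart p.1 + sPart p.2 = sPart m' := by rw [← sPart_add, hp]
      have hd1 : deg (sPart p.1) + deg (sPart p.2) = deg (sPart m') := by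
        rw [← deg_add, hps]
      have c1 : MvPowerSeries.coeff (R := R) p.1 (pd R (Sum.inl i) Ψ₁)
          = MvPowerSeries.coeff (R := R) p.1 (pd R (Sum.inl i) Ψ₂) := by
        rw [coeff_pd, coeff_pd]
        have hsp : deg (sPart (p.1 + Finsupp.single (Sum.inl i : Fin r ⊕ SVar r) 1))
            = deg (sPart p.1) := by
          rw [sPart_add, sPart_single_inl, add_zero]
        rw [IH (deg (sPart p.1)) (by omega) _ hsp]
      have c2 : MvPowerSeries.coeff (R := R) p.2 (pd R (Sum.inl j) Ψ₁)
          = MvPowerSeries.coeff (R := R) p.2 (pd R (Sum.inl j) Ψ₂) := by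
        rw [coeff_pd, coeff_pd]
        have hsp : deg (sPart (p.2 + Finsupp.single (Sum.inl j : Fin r ⊕ SVar r) 1))
            = deg (sPart p.2) := by
          rw [sPart_add, sPart_single_inl, add_zero]
        rw [IH (deg (sPart p.2)) (by omega) _ hsp]
      rw [c1, c2]
    have hc1 := congrArg (MvPowerSeries.coeff (R := R) m') E1
    have hc2 := congrArg (MvPowerSeries.coeff (R := R) m') E2
    rw [coeff_pd, hm'add] at hc1 hc2
    rw [smul_apply', MvPowerSeries.coeff_C_mul, map_add, hA, hB] at hc1
    rw [smul_apply', MvPowerSeries.coeff_C_mul, map_add] at hc2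
    have hfin : ((m' (Sum.inr s) + 1 : ℕ) : R) * MvPowerSeries.coeff (R := R) m Ψ₁
        = ((m' (Sum.inr s) + 1 : ℕ) : R) * MvPowerSeries.coeff (R := R) m Ψ₂ := by
      rw [hc1, hc2]
    exact nat_cancel (Nat.succ_ne_zero _) hfin

/-- of the problem: existence and uniqueness. -/
theorem stmt1_aux (hbar : R) (U : MvPowerSeries (Fin r) R) :
    ∃! Ψ : MvPowerSeries (Fin r ⊕ SVar r) R,
      (∀ i j : Fin r, i ≤ j →
        pd R (Sum.inr (sIdx i j)) Ψ =
          (if i = j then (2 : ℚ)⁻¹ else 1) •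
            (MvPowerSeries.C (σ := Fin r ⊕ SVar r) (R := R) hbar *
              (pd R (Sum.inl i) (pd R (Sum.inl j) Ψ) +
                pd R (Sum.inl i) Ψ * pd R (Sum.inl j) Ψ))) ∧
      resS0 Ψ = U := by
  classical
  set c : R := MvPowerSeries.constantCoeff (σ := Fin r) (R := R) U with hcdef
  set f : MvPowerSeries (Fin r) R := U - MvPowerSeries.C (σ := Fin r) (R := R) c with hfdef
  have hf : MvPowerSeries.constantCoeff (σ := Fin r) (R := R) f = 0 := by
    rw [hfdef, map_sub, MvPowerSeries.constantCoeff_C, sub_self]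
  set Φ₀ : MvPowerSeries (Fin r) R := Exp f with hPhi0def
  set Φ : MvPowerSeries (Fin r ⊕ SVar r) R := Phi hbar Φ₀ with hPhidef
  have hcc : MvPowerSeries.constantCoeff (R := R) Φ = 1 := by
    rw [hPhidef, constantCoeff_Phi, hPhi0def, constantCoeff_Exp]
  have hPhiUnit : IsUnit Φ := by
    rw [MvPowerSeries.isUnit_iff_constantCoeff, hcc]
    exact isUnit_one
  set u : MvPowerSeries (Fin r ⊕ SVar r) R := Φ - 1 with hudef
  have hu : MvPowerSeries.constantCoeff (R := R) u = 0 := by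
    rw [hudef, map_sub, hcc, map_one, sub_self]
  set Ψ : MvPowerSeries (Fin r ⊕ SVar r) R :=
    MvPowerSeries.C (σ := Fin r ⊕ SVar r) (R := R) c + Log1p u with hPsidef
  have hpdPsi : ∀ t, pd R t Ψ = pd R t (Log1p u) := by
    intro t
    rw [hPsidef, pd_add, pd_C, zero_add]
  have hkey : ∀ t, Φ * pd R t Ψ = pd R t Φ := by
    intro t
    rw [hpdPsi t]
    have h9 := one_add_mul_pd_Log1p hu t
    have h1u : (1 : MvPowerSeries (Fin r ⊕ SVar r) R) + u = Φ := by rw [hudef]; ring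
    have h2 : pd R t u = pd R t Φ := by rw [hudef, pd_sub, pd_one, sub_zero]
    rw [h1u, h2] at h9
    exact h9
  have hBurgers : ∀ i j : Fin r, i ≤ j →
      pd R (Sum.inr (sIdx i j)) Ψ =
        (if i = j then (2 : ℚ)⁻¹ else 1) •
          (MvPowerSeries.C (σ := Fin r ⊕ SVar r) (R := R) hbar *
            (pd R (Sum.inl i) (pd R (Sum.inl j) Ψ) +
              pd R (Sum.inl i) Ψ * pd R (Sum.inl j) Ψ)) := by
    intro i j hij
    set s : SVar r := ⟨(i, j), hij⟩ with hsdef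
    have hsidx : sIdx i j = s := by unfold sIdx; exact dif_pos hij
    rw [hsidx]
    have hq : (fct s)⁻¹ = (if i = j then (2 : ℚ)⁻¹ else 1) := by
      have : fct s = if i = j then (2 : ℚ) else 1 := rfl
      rw [this]
      split <;> norm_num
    apply hPhiUnit.mul_left_cancel
    rw [hkey (Sum.inr s)]
    have hheat := heat hbar Φ₀ s
    rw [← hPhidef] at hheat
    rw [hheat]
    have e2 : pd R (Sum.inl i) (pd R (Sum.inl j) Φ)
        = Φ * (pd R (Sum.inl i) (pd R (Sum.inl j) Ψ)
            + pd R (Sum.inl i) Ψ * pd R (Sum.inl j) Ψ) := by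
      have hj : pd R (Sum.inl j) Φ = Φ * pd R (Sum.inl j) Ψ := (hkey _).symm
      calc pd R (Sum.inl i) (pd R (Sum.inl j) Φ)
          = pd R (Sum.inl i) (Φ * pd R (Sum.inl j) Ψ) := by rw [← hj]
        _ = pd R (Sum.inl i) Φ * pd R (Sum.inl j) Ψ
            + Φ * pd R (Sum.inl i) (pd R (Sum.inl j) Ψ) := pd_mul _ _ _
        _ = (Φ * pd R (Sum.inl i) Ψ) * pd R (Sum.inl j) Ψ
            + Φ * pd R (Sum.inl i) (pd R (Sum.inl j) Ψ) := by rw [hkey (Sum.inl i)]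
        _ = Φ * (pd R (Sum.inl i) (pd R (Sum.inl j) Ψ)
            + pd R (Sum.inl i) Ψ * pd R (Sum.inl j) Ψ) := by ring
    have hs11 : s.1.1 = i := rfl
    have hs12 : s.1.2 = j := rfl
    rw [hs11, hs12, e2, hq, mul_smul_comm]
    congr 1
    ring
  have hres : resS0 Ψ = U := by
    rw [hPsidef, resS0_add, resS0_C, resS0_Log1p]
    have h1 : resS0 u = Φ₀ - 1 := by
      rw [hudef, resS0_sub, resS0_one, hPhidef, resS0_Phi]
    rw [h1, hPhi0def, Log1p_Exp hf, hfdef]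
    ring
  exact ⟨Ψ, ⟨hBurgers, hres⟩, fun Ψ' h' => uniq hbar U h'.1 h'.2 hBurgers hres⟩

end Main

end Burgers

/-- For every `ħ ∈ R` and every `U ∈ R[[x_1,…,x_r]]` there is a unique
formal power series `Ψ` with
`∂Ψ/∂s_{ij} = (ħ/{ij}!)·[∂²Ψ/∂x_i∂x_j + (∂Ψ/∂x_i)(∂Ψ/∂x_j)]` for all `i ≤ j`,
and `Ψ|_{S=0} = U`. -/
theorem stmt1 {r : ℕ} (hr : 1 ≤ r) (R : Type*) [CommRing R] [Algebra ℚ R]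
    (hbar : R) (U : MvPowerSeries (Fin r) R) :
    ∃! Ψ : MvPowerSeries (Fin r ⊕ SVar r) R,
      (∀ i j : Fin r, i ≤ j →
        pd R (Sum.inr (sIdx i j)) Ψ =
          (if i = j then (2 : ℚ)⁻¹ else 1) •
            (MvPowerSeries.C (σ := Fin r ⊕ SVar r) (R := R) hbar *
              (pd R (Sum.inl i) (pd R (Sum.inl j) Ψ) +
                pd R (Sum.inl i) Ψ * pd R (Sum.inl j) Ψ))) ∧
      resS0 Ψ = U :=
  Burgers.stmt1_aux hbar U
end

section
/- Let U₀ ∈ R[[x_1,…,x_r]], let F_i := ∂U₀/∂x_i, let H(X) be the Hessian matrix (∂²U₀/∂x_i∂x_j)_{i,j}, and let Φ = (Φ_1,…,Φ_r) be the unique r-tuple of elements of A satisfying Φ_m = F_m(X + SΦ) for all m, where X + SΦ = (x_i + Σ_j s_{ij}Φ_j)_i. Let Θ be the r×r matrix over A with entries Θ_{ij} := ∂Φ_i/∂x_j, let S denote the matrix (s_{ij}), and let H(X+SΦ) denote the matrix obtained by substituting the tuple X+SΦ into each entry of H. Then (E + SΘ)·(E − S·H(X+SΦ)) = E and (E − S·H(X+SΦ))·(E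 + SΘ) = E, where E is the r×r identity matrix over A; i.e. E + SΘ is the inverse of E − S·H(X+SΦ). -/
/-- Total degree of a monomial. -/
def mdeg {σ : Type*} (m : σ →₀ ℕ) : ℕ := m.sum fun _ e => e

/-- Formal substitution `F(G) = Σ_m (coeff_m F) · ∏_i G_i^{m_i}`, for tuples `G` whose
components have zero constant coefficient, computed coefficientwise: since
`∏ G_i^{m_i}` has order `≥ |m|`, only multi-indices `m` with `|m| ≤ deg μ` (in
particular `m ≤ (deg μ, …, deg μ)`) contribute to the coefficient at `μ`. -/
noncomputable def substT {σ τ R : Type*} [Fintype σ] [DecidableEq σ] [CommRing R]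
    (F : MvPowerSeries σ R) (G : σ → MvPowerSeries τ R) : MvPowerSeries τ R :=
  fun μ => MvPowerSeries.coeff (R := R) μ
    (∑ m ∈ Finset.Iic (Finsupp.equivFunOnFinite.symm (fun _ : σ => mdeg μ)),
      MvPowerSeries.coeff (R := R) m F • ∏ i, (G i) ^ (m i))

set_option linter.unusedSectionVars false
set_option linter.unusedVariables false

open MvPowerSeries
section Aux

variable {σ τ R : Type*} [CommRing R]

lemma mdeg_add (a b : σ →₀ ℕ) : mdeg (a + b) = mdeg a + mdeg b :=
  Finsupp.sum_add_index' (fun _ => rfl) (fun _ _ _ => rfl)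

lemma mdeg_single (i : σ) (n : ℕ) : mdeg (Finsupp.single i n) = n :=
  Finsupp.sum_single_index rfl

lemma mdeg_zero : mdeg (0 : σ →₀ ℕ) = 0 := rfl

lemma le_mdeg (m : σ →₀ ℕ) (i : σ) : m i ≤ mdeg m := by
  by_cases h : m i = 0
  · simp [h]
  · exact Finset.single_le_sum (f := fun i => m i) (fun _ _ => Nat.zero_le _)
      (Finsupp.mem_support_iff.mpr h)

lemma mdeg_eq_zero_iff {m : σ →₀ ℕ} : mdeg m = 0 ↔ m = 0 := by
  constructor
  · intro h
    ext i
    have := le_mdeg m i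
    simp only [Finsupp.coe_zero, Pi.zero_apply]
    omega
  · rintro rfl; rfl

lemma mdeg_sum_eq [Fintype σ] (m : σ →₀ ℕ) : ∑ i, m i = mdeg m :=
  (Finsupp.sum_fintype m (fun _ e => e) (fun _ => rfl)).symm

section Ord
variable [DecidableEq σ]

lemma ordge_mul {f g : MvPowerSeries σ R} {a b : ℕ}
    (hf : ∀ μ : σ →₀ ℕ, mdeg μ < a → coeff (R := R) μ f = 0)
    (hg : ∀ μ : σ →₀ ℕ, mdeg μ < b → coeff (R := R) μ g = 0) :
    ∀ μ : σ →₀ ℕ, mdeg μ < a + b → coeff (R := R) μ (f * g) = 0 := by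
  intro μ h
  rw [coeff_mul]
  apply Finset.sum_eq_zero
  rintro ⟨p, q⟩ hpq
  rw [Finset.HasAntidiagonal.mem_antidiagonal] at hpq
  have hd : mdeg p + mdeg q = mdeg μ := by rw [← mdeg_add, hpq]
  by_cases hp : mdeg p < a
  · simp [hf p hp]
  · have : mdeg q < b := by omega
    simp [hg _ this]

lemma ordge_prod {ι : Type*} (s : Finset ι) (f : ι → MvPowerSeries σ R) (d : ι → ℕ)
    (h : ∀ i ∈ s, ∀ μ : σ →₀ ℕ, mdeg μ < d i → coeff (R := R) μ (f i) = 0) :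
    ∀ μ : σ →₀ ℕ, mdeg μ < ∑ i ∈ s, d i → coeff (R := R) μ (∏ i ∈ s, f i) = 0 := by
  classical
  induction s using Finset.induction with
  | empty => intro μ hμ; simp at hμ
  | @insert x s hx ih =>
    rw [Finset.prod_insert hx, Finset.sum_insert hx]
    exact ordge_mul (h x (Finset.mem_insert_self x s))
      (ih fun i hi => h i (Finset.mem_insert_of_mem hi))

lemma ordge_pow {f : MvPowerSeries σ R} (hf : constantCoeff (σ := σ) (R := R) f = 0) (n : ℕ) :
    ∀ μ : σ →₀ ℕ, mdeg μ < n → coeff (R := R) μ (f ^ n) = 0 := by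
  have base : ∀ μ : σ →₀ ℕ, mdeg μ < 1 → coeff (R := R) μ f = 0 := by
    intro μ hμ
    have : μ = 0 := mdeg_eq_zero_iff.mp (by omega)
    subst this
    exact hf
  have := ordge_prod (Finset.range n) (fun _ => f) (fun _ => 1)
    (fun i _ => base)
  simpa using this

end Ord

lemma coeff_prod_pow_eq_zero [Fintype σ] [DecidableEq τ]
    (G : σ → MvPowerSeries τ R) (h0 : ∀ i, constantCoeff (σ := τ) (R := R) (G i) = 0)
    (m : σ →₀ ℕ) (μ : τ →₀ ℕ) (h : mdeg μ < mdeg m) :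
    coeff (R := R) μ (∏ i, (G i) ^ (m i)) = 0 := by
  refine ordge_prod Finset.univ (fun i => G i ^ m i) (fun i => m i)
    (fun i _ => ordge_pow (h0 i) (m i)) μ ?_
  rwa [mdeg_sum_eq]

end Aux

open MvPowerSeries

section Pd

variable {σ R : Type*} [CommRing R]

lemma coeff_pd (i : σ) (f : MvPowerSeries σ R) (m : σ →₀ ℕ) :
    coeff (R := R) m (pd R i f) = (((m i) + 1 : ℕ) : R) * coeff (R := R) (m + Finsupp.single i 1) f := rfl

lemma pd_add (i : σ) (f g : MvPowerSeries σ R) :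
    pd R i (f + g) = pd R i f + pd R i g := by
  apply MvPowerSeries.ext; intro n
  simp [coeff_pd, map_add, mul_add]

lemma pd_zero (i : σ) : pd R i (0 : MvPowerSeries σ R) = 0 := by
  apply MvPowerSeries.ext; intro n
  simp [coeff_pd]

noncomputable def pdHom (i : σ) : MvPowerSeries σ R →+ MvPowerSeries σ R where
  toFun := pd R i
  map_zero' := pd_zero i
  map_add' := pd_add i

variable [DecidableEq σ]

lemma pd_monomial (i : σ) (m : σ →₀ ℕ) (c : R) :
    pd R i (MvPowerSeries.monomial (R := R) m c)
      = MvPowerSeries.monomial (R := R) (m - Finsupp.single i 1) (((m i : ℕ) : R) * c) := by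
  apply MvPowerSeries.ext; intro n
  rw [coeff_pd, MvPowerSeries.coeff_monomial, MvPowerSeries.coeff_monomial]
  by_cases h1 : n + Finsupp.single i 1 = m
  · have hmi : m i = n i + 1 := by rw [← h1]; simp
    have hn : n = m - Finsupp.single i 1 := by
      rw [← h1]; ext j; by_cases hj : j = i <;> simp [hj]
    rw [if_pos h1, if_pos hn, hmi]
  · rw [if_neg h1]
    by_cases h2 : n = m - Finsupp.single i 1
    · rw [if_pos h2]
      have hmi : m i = 0 := by
        by_contra hc
        apply h1
        rw [h2, tsub_add_cancel_of_le (Finsupp.single_le_iff.mpr (by omega))]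
      rw [hmi]; push_cast; ring
    · rw [if_neg h2]; ring

lemma pd_one (i : σ) : pd R i (1 : MvPowerSeries σ R) = 0 := by
  have : (1 : MvPowerSeries σ R) = MvPowerSeries.monomial (R := R) 0 1 := by simp
  rw [this, pd_monomial]
  simp

lemma pd_X (i j : σ) :
    pd R i (MvPowerSeries.X j : MvPowerSeries σ R) = if j = i then 1 else 0 := by
  rw [MvPowerSeries.X, pd_monomial]
  by_cases h : j = i
  · subst h; simp
  · simp [Finsupp.single_apply, h]

lemma pd_comm (i j : σ) (f : MvPowerSeries σ R) :
    pd R i (pd R j f) = pd R j (pd R i f) := by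
  apply MvPowerSeries.ext; intro n
  rw [coeff_pd, coeff_pd, coeff_pd, coeff_pd]
  have h1 : n + Finsupp.single i 1 + Finsupp.single j 1
      = n + Finsupp.single j 1 + Finsupp.single i 1 := by
    rw [add_assoc, add_assoc, add_comm (Finsupp.single i 1)]
  rw [h1]
  by_cases h : i = j
  · subst h; ring
  · have h2 : ((n + Finsupp.single i 1 : σ →₀ ℕ)) j = n j := by
      rw [Finsupp.add_apply, Finsupp.single_apply, if_neg h, add_zero]
    have h3 : ((n + Finsupp.single j 1 : σ →₀ ℕ)) i = n i := by
      rw [Finsupp.add_apply, Finsupp.single_apply, if_neg (Ne.symm h), add_zero]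
    rw [h2, h3]; ring

private lemma leibniz_aux (t : σ) (f g : MvPowerSeries σ R) (n : σ →₀ ℕ) :
    ∑ p ∈ Finset.HasAntidiagonal.antidiagonal (n + Finsupp.single t 1),
        (((p.1 : σ →₀ ℕ) t : ℕ) : R) * (coeff (R := R) p.1 f * coeff (R := R) p.2 g)
      = ∑ q ∈ Finset.HasAntidiagonal.antidiagonal n, coeff (R := R) q.1 (pd R t f) * coeff (R := R) q.2 g := by
  set e : σ →₀ ℕ := Finsupp.single t 1 with he
  refine Finset.sum_bij_ne_zero (i := fun p _ _ => (p.1 - e, p.2)) ?_ ?_ ?_ ?_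
  · rintro ⟨p1, p2⟩ hp hne
    rw [Finset.HasAntidiagonal.mem_antidiagonal] at hp ⊢
    have hp1t : p1 t ≠ 0 := by
      intro h0; apply hne; simp [h0]
    have hle : e ≤ p1 := by rw [he, Finsupp.single_le_iff]; omega
    have : p1 - e + p2 + e = n + e := by
      rw [add_right_comm, tsub_add_cancel_of_le hle]
      exact hp
    exact add_right_cancel this
  · rintro ⟨p1, p2⟩ h11 h12 ⟨q1, q2⟩ h21 h22 heq
    have hp1t : p1 t ≠ 0 := fun h0 => h12 (by simp [h0])
    have hq1t : q1 t ≠ 0 := fun h0 => h22 (by simp [h0])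
    have hle : e ≤ p1 := by rw [he, Finsupp.single_le_iff]; omega
    have hle' : e ≤ q1 := by rw [he, Finsupp.single_le_iff]; omega
    have h1 := congrArg Prod.fst heq
    have h2 := congrArg Prod.snd heq
    simp only at h1 h2
    have hfst : p1 = q1 := by
      have := congrArg (· + e) h1
      simpa [tsub_add_cancel_of_le hle, tsub_add_cancel_of_le hle'] using this
    simp [Prod.ext_iff, hfst, h2]
  · rintro ⟨q1, q2⟩ hq hne
    rw [Finset.HasAntidiagonal.mem_antidiagonal] at hq
    have hval : ((((q1 + e : σ →₀ ℕ)) t : ℕ) : R) * (coeff (R := R) (q1 + e) f * coeff (R := R) q2 g)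
        = coeff (R := R) q1 (pd R t f) * coeff (R := R) q2 g := by
      rw [coeff_pd]
      have hq1 : ((q1 + e : σ →₀ ℕ)) t = q1 t + 1 := by simp [he]
      rw [hq1, ← he]
      ring
    refine ⟨(q1 + e, q2), ?_, ?_, ?_⟩
    · rw [Finset.HasAntidiagonal.mem_antidiagonal]
      show q1 + e + q2 = n + e
      rw [add_right_comm, hq]
    · show ((((q1 + e : σ →₀ ℕ)) t : ℕ) : R) * (coeff (R := R) (q1 + e) f * coeff (R := R) q2 g) ≠ 0
      rw [hval]; exact hne
    · show ((q1 + e - e : σ →₀ ℕ), q2) = (q1, q2)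
      simp
  · rintro ⟨p1, p2⟩ hp hne
    have hp1t : p1 t ≠ 0 := fun h0 => hne (by simp [h0])
    have hle : e ≤ p1 := by rw [he, Finsupp.single_le_iff]; omega
    show ((p1 t : ℕ) : R) * (coeff (R := R) p1 f * coeff (R := R) p2 g)
        = coeff (R := R) (p1 - e) (pd R t f) * coeff (R := R) p2 g
    rw [coeff_pd, ← he, tsub_add_cancel_of_le hle]
    have h1 : ((p1 - e : σ →₀ ℕ)) t + 1 = p1 t := by
      have h2 : ((p1 - e : σ →₀ ℕ)) t = p1 t - 1 := by simp [he]
      omega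
    rw [h1]; ring

/-- Leibniz rule. -/
lemma pd_mul (t : σ) (f g : MvPowerSeries σ R) :
    pd R t (f * g) = pd R t f * g + f * pd R t g := by
  apply MvPowerSeries.ext; intro n
  set e : σ →₀ ℕ := Finsupp.single t 1 with he
  rw [map_add, coeff_pd, MvPowerSeries.coeff_mul, MvPowerSeries.coeff_mul,
    MvPowerSeries.coeff_mul, Finset.mul_sum, ← he]
  have key : ∀ p ∈ Finset.HasAntidiagonal.antidiagonal (n + e),
      (((n t) + 1 : ℕ) : R) * (coeff (R := R) p.1 f * coeff (R := R) p.2 g)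
      = (((p.1 : σ →₀ ℕ) t : ℕ) : R) * (coeff (R := R) p.1 f * coeff (R := R) p.2 g)
        + (((p.2 : σ →₀ ℕ) t : ℕ) : R) * (coeff (R := R) p.1 f * coeff (R := R) p.2 g) := by
    rintro ⟨p1, p2⟩ hp
    rw [Finset.HasAntidiagonal.mem_antidiagonal] at hp
    have hsum : p1 t + p2 t = n t + 1 := by
      have h := congrArg (fun m : σ →₀ ℕ => m t) hp
      simpa [he] using h
    rw [← add_mul]
    congr 1
    push_cast [← hsum]
    ring
  rw [Finset.sum_congr rfl key, Finset.sum_add_distrib]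
  congr 1
  · rw [he]
    exact leibniz_aux t f g n
  · have swap1 : ∑ p ∈ Finset.HasAntidiagonal.antidiagonal (n + e),
        (((p.2 : σ →₀ ℕ) t : ℕ) : R) * (coeff (R := R) p.1 f * coeff (R := R) p.2 g)
        = ∑ p ∈ Finset.HasAntidiagonal.antidiagonal (n + e),
        (((p.1 : σ →₀ ℕ) t : ℕ) : R) * (coeff (R := R) p.1 g * coeff (R := R) p.2 f) := by
      conv_rhs => rw [← Finset.HasAntidiagonal.map_swap_antidiagonal]
      rw [Finset.sum_map]
      apply Finset.sum_congr rfl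
      rintro ⟨p1, p2⟩ _
      simp [mul_comm]
    have swap2 : ∑ q ∈ Finset.HasAntidiagonal.antidiagonal n, coeff (R := R) q.1 (pd R t g) * coeff (R := R) q.2 f
        = ∑ q ∈ Finset.HasAntidiagonal.antidiagonal n, coeff (R := R) q.1 f * coeff (R := R) q.2 (pd R t g) := by
      conv_rhs => rw [← Finset.HasAntidiagonal.map_swap_antidiagonal]
      rw [Finset.sum_map]
      apply Finset.sum_congr rfl
      rintro ⟨q1, q2⟩ _
      simp [mul_comm]
    rw [swap1, he, leibniz_aux t g f n, swap2]

end Pd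

section Subst

variable {σ τ R : Type*} [CommRing R]

lemma pd_C [DecidableEq σ] (i : σ) (c : R) :
    pd R i (MvPowerSeries.C (σ := σ) (R := R) c) = 0 := by
  have : (MvPowerSeries.C (σ := σ) (R := R) c : MvPowerSeries σ R) = MvPowerSeries.monomial (R := R) 0 c := rfl
  rw [this, pd_monomial]
  simp

lemma pd_prod {ι : Type*} [DecidableEq ι] [DecidableEq σ]
    (s : Finset ι) (f : ι → MvPowerSeries σ R) (t : σ) :
    pd R t (∏ i ∈ s, f i) = ∑ i ∈ s, (∏ j ∈ s.erase i, f j) * pd R t (f i) := by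
  induction s using Finset.induction with
  | empty => simp [pd_one]
  | @insert x s hx ih =>
    rw [Finset.prod_insert hx, pd_mul, ih, Finset.sum_insert hx, Finset.erase_insert hx,
      Finset.mul_sum]
    congr 1
    · ring
    apply Finset.sum_congr rfl
    intro i hi
    have hne : i ≠ x := by rintro rfl; exact hx hi
    rw [Finset.erase_insert_of_ne hne.symm,
      Finset.prod_insert (fun h => hx (Finset.mem_of_mem_erase h))]
    ring

lemma pd_pow [DecidableEq σ] (a : MvPowerSeries σ R) (t : σ) (k : ℕ) :
    pd R t (a ^ k) = (k : MvPowerSeries σ R) * a ^ (k - 1) * pd R t a := by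
  induction k with
  | zero => simp [pd_one]
  | succ k ih =>
    rw [pow_succ, pd_mul, ih]
    cases k with
    | zero => simp
    | succ j =>
      rw [Nat.add_sub_cancel, Nat.add_sub_cancel]
      have hpow : a ^ j * a = a ^ (j + 1) := (pow_succ a j).symm
      push_cast
      calc ((j : MvPowerSeries σ R) + 1) * a ^ j * pd R t a * a + a ^ (j+1) * pd R t a
          = ((j : MvPowerSeries σ R) + 1) * (a ^ j * a) * pd R t a
            + a ^ (j+1) * pd R t a := by ring
        _ = _ := by rw [hpow]; ring

lemma pd_prod_pow {σ' : Type*} [Fintype σ'] [DecidableEq σ'] [DecidableEq σ]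
    (G : σ' → MvPowerSeries σ R) (m : σ' →₀ ℕ) (t : σ) :
    pd R t (∏ i, G i ^ m i)
      = ∑ i, ((m i : ℕ) : MvPowerSeries σ R)
          * ((∏ j, G j ^ ((m - Finsupp.single i 1 : σ' →₀ ℕ) j)) * pd R t (G i)) := by
  rw [pd_prod]
  apply Finset.sum_congr rfl
  intro i _
  rw [pd_pow]
  have hprod : ∏ j, G j ^ ((m - Finsupp.single i 1 : σ' →₀ ℕ) j)
      = G i ^ (m i - 1) * ∏ j ∈ Finset.univ.erase i, G j ^ m j := by
    rw [← Finset.mul_prod_erase Finset.univ (fun j => G j ^ ((m - Finsupp.single i 1 : σ' →₀ ℕ) j))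
      (Finset.mem_univ i)]
    congr 1
    · congr 1
      simp
    · apply Finset.prod_congr rfl
      intro j hj
      have : j ≠ i := Finset.ne_of_mem_erase hj
      congr 1
      simp [Finsupp.single_apply, Ne.symm this]
  rw [hprod]
  ring

variable [Fintype σ] [DecidableEq σ] [DecidableEq τ]

lemma coeff_substT (F : MvPowerSeries σ R) (G : σ → MvPowerSeries τ R) (μ : τ →₀ ℕ) :
    MvPowerSeries.coeff (R := R) μ (substT F G)
      = ∑ m ∈ Finset.Iic (Finsupp.equivFunOnFinite.symm (fun _ : σ => mdeg μ)),
          MvPowerSeries.coeff (R := R) m F * MvPowerSeries.coeff (R := R) μ (∏ i, (G i) ^ (m i)) := by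
  rw [MvPowerSeries.coeff_apply]
  show MvPowerSeries.coeff (R := R) μ _ = _
  rw [map_sum]
  apply Finset.sum_congr rfl
  intro m _
  rw [MvPowerSeries.coeff_smul]

lemma mem_Iic_bnd_iff (m : σ →₀ ℕ) (N : ℕ) :
    m ∈ Finset.Iic (Finsupp.equivFunOnFinite.symm (fun _ : σ => N)) ↔ ∀ i, m i ≤ N := by
  rw [Finset.mem_Iic, Finsupp.le_def]
  simp

lemma substT_add (F₁ F₂ : MvPowerSeries σ R) (G : σ → MvPowerSeries τ R) :
    substT (F₁ + F₂) G = substT F₁ G + substT F₂ G := by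
  apply MvPowerSeries.ext; intro μ
  rw [map_add, coeff_substT, coeff_substT, coeff_substT, ← Finset.sum_add_distrib]
  apply Finset.sum_congr rfl
  intro m _
  rw [map_add]; ring

lemma substT_zero (G : σ → MvPowerSeries τ R) : substT (0 : MvPowerSeries σ R) G = 0 := by
  apply MvPowerSeries.ext; intro μ
  rw [coeff_substT]
  simp

noncomputable def substTHom (G : σ → MvPowerSeries τ R) :
    MvPowerSeries σ R →+ MvPowerSeries τ R where
  toFun := fun F => substT F G
  map_zero' := substT_zero G
  map_add' := fun a b => substT_add a b G

lemma substT_monomial (G : σ → MvPowerSeries τ R)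
    (h0 : ∀ i, MvPowerSeries.constantCoeff (σ := τ) (R := R) (G i) = 0) (m : σ →₀ ℕ) (c : R) :
    substT (MvPowerSeries.monomial (R := R) m c) G
      = MvPowerSeries.C (σ := τ) (R := R) c * ∏ i, (G i) ^ (m i) := by
  apply MvPowerSeries.ext; intro μ
  rw [coeff_substT, MvPowerSeries.coeff_C_mul]
  have : ∀ m' ∈ Finset.Iic (Finsupp.equivFunOnFinite.symm (fun _ : σ => mdeg μ)),
      MvPowerSeries.coeff (R := R) m' (MvPowerSeries.monomial (R := R) m c)
          * MvPowerSeries.coeff (R := R) μ (∏ i, (G i) ^ (m' i))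
      = if m' = m then c * MvPowerSeries.coeff (R := R) μ (∏ i, (G i) ^ (m' i)) else 0 := by
    intro m' _
    rw [MvPowerSeries.coeff_monomial]
    split <;> simp
  rw [Finset.sum_congr rfl this, Finset.sum_ite_eq']
  by_cases hm : m ∈ Finset.Iic (Finsupp.equivFunOnFinite.symm (fun _ : σ => mdeg μ))
  · rw [if_pos hm]
  · rw [if_neg hm]
    rw [mem_Iic_bnd_iff] at hm
    push_neg at hm
    obtain ⟨i, hi⟩ := hm
    have : mdeg μ < mdeg m := lt_of_lt_of_le hi (le_mdeg m i)
    rw [coeff_prod_pow_eq_zero G h0 m μ this]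
    ring

lemma pd_substT_monomial (G : σ → MvPowerSeries τ R)
    (h0 : ∀ i, MvPowerSeries.constantCoeff (σ := τ) (R := R) (G i) = 0) (m : σ →₀ ℕ) (c : R) (t : τ) :
    pd R t (substT (MvPowerSeries.monomial (R := R) m c) G)
      = ∑ i, substT (pd R i (MvPowerSeries.monomial (R := R) m c)) G * pd R t (G i) := by
  rw [substT_monomial G h0, pd_mul, pd_C, zero_mul, zero_add, pd_prod_pow, Finset.mul_sum]
  apply Finset.sum_congr rfl
  intro i _
  rw [pd_monomial, substT_monomial G h0, map_mul, map_natCast]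
  ring

lemma pd_substT_finsum (G : σ → MvPowerSeries τ R)
    (h0 : ∀ i, MvPowerSeries.constantCoeff (σ := τ) (R := R) (G i) = 0)
    (s : Finset (σ →₀ ℕ)) (c : (σ →₀ ℕ) → R) (t : τ) :
    pd R t (substT (∑ m ∈ s, MvPowerSeries.monomial (R := R) m (c m)) G)
      = ∑ i, substT (pd R i (∑ m ∈ s, MvPowerSeries.monomial (R := R) m (c m))) G * pd R t (G i) := by
  have h1 : substT (∑ m ∈ s, MvPowerSeries.monomial (R := R) m (c m)) G
      = ∑ m ∈ s, substT (MvPowerSeries.monomial (R := R) m (c m)) G :=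
    map_sum (substTHom G) _ s
  have h2 : ∀ i : σ, pd R i (∑ m ∈ s, MvPowerSeries.monomial (R := R) m (c m))
      = ∑ m ∈ s, pd R i (MvPowerSeries.monomial (R := R) m (c m)) :=
    fun i => map_sum (pdHom i) _ s
  have h3 : pd R t (∑ m ∈ s, substT (MvPowerSeries.monomial (R := R) m (c m)) G)
      = ∑ m ∈ s, pd R t (substT (MvPowerSeries.monomial (R := R) m (c m)) G) :=
    map_sum (pdHom t) _ s
  rw [h1, h3]
  have h4 : ∀ i : σ, substT (∑ m ∈ s, pd R i (MvPowerSeries.monomial (R := R) m (c m))) G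
      = ∑ m ∈ s, substT (pd R i (MvPowerSeries.monomial (R := R) m (c m))) G :=
    fun i => map_sum (substTHom G) _ s
  calc ∑ m ∈ s, pd R t (substT (MvPowerSeries.monomial (R := R) m (c m)) G)
      = ∑ m ∈ s, ∑ i, substT (pd R i (MvPowerSeries.monomial (R := R) m (c m))) G * pd R t (G i) :=
        Finset.sum_congr rfl (fun m _ => pd_substT_monomial G h0 m (c m) t)
    _ = ∑ i, ∑ m ∈ s, substT (pd R i (MvPowerSeries.monomial (R := R) m (c m))) G * pd R t (G i) :=
        Finset.sum_comm
    _ = _ := by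
        apply Finset.sum_congr rfl
        intro i _
        rw [h2 i, h4 i, Finset.sum_mul]

/-- The chain rule. -/
lemma pd_substT (F : MvPowerSeries σ R) (G : σ → MvPowerSeries τ R)
    (h0 : ∀ i, MvPowerSeries.constantCoeff (σ := τ) (R := R) (G i) = 0) (t : τ) :
    pd R t (substT F G) = ∑ i, substT (pd R i F) G * pd R t (G i) := by
  apply MvPowerSeries.ext; intro μ
  set N : ℕ := mdeg μ + 1 with hN
  set B : σ →₀ ℕ := Finsupp.equivFunOnFinite.symm (fun _ : σ => N) with hB
  set P : MvPowerSeries σ R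
    := ∑ m ∈ Finset.Iic B, MvPowerSeries.monomial (R := R) m (MvPowerSeries.coeff (R := R) m F) with hP
  have hPc : ∀ m : σ →₀ ℕ, (∀ i, m i ≤ N) → MvPowerSeries.coeff (R := R) m P
      = MvPowerSeries.coeff (R := R) m F := by
    intro m hm
    rw [hP, map_sum]
    have : ∀ m' ∈ Finset.Iic B,
        MvPowerSeries.coeff (R := R) m (MvPowerSeries.monomial (R := R) m' (MvPowerSeries.coeff (R := R) m' F))
        = if m' = m then MvPowerSeries.coeff (R := R) m' F else 0 := by
      intro m' _
      rw [MvPowerSeries.coeff_monomial]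
      by_cases h : m = m'
      · rw [if_pos h, if_pos h.symm]
      · rw [if_neg h, if_neg (Ne.symm h)]
    rw [Finset.sum_congr rfl this, Finset.sum_ite_eq',
      if_pos ((mem_Iic_bnd_iff m N).mpr hm)]
  have hmdeg : mdeg (μ + Finsupp.single t 1) = N := by
    rw [mdeg_add, mdeg_single]
  have hL : MvPowerSeries.coeff (R := R) μ (pd R t (substT F G))
      = MvPowerSeries.coeff (R := R) μ (pd R t (substT P G)) := by
    rw [coeff_pd, coeff_pd, coeff_substT, coeff_substT]
    congr 1
    apply Finset.sum_congr rfl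
    intro m hm
    rw [mem_Iic_bnd_iff] at hm
    rw [hPc m (fun i => by rw [← hmdeg]; exact hm i)]
  have hR : MvPowerSeries.coeff (R := R) μ (∑ i, substT (pd R i F) G * pd R t (G i))
      = MvPowerSeries.coeff (R := R) μ (∑ i, substT (pd R i P) G * pd R t (G i)) := by
    rw [map_sum, map_sum]
    apply Finset.sum_congr rfl
    intro i _
    rw [MvPowerSeries.coeff_mul, MvPowerSeries.coeff_mul]
    apply Finset.sum_congr rfl
    rintro ⟨a, b⟩ hab
    rw [Finset.HasAntidiagonal.mem_antidiagonal] at hab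
    have hda : mdeg a ≤ mdeg μ := by
      have : mdeg a + mdeg b = mdeg μ := by rw [← mdeg_add, hab]
      omega
    congr 1
    rw [coeff_substT, coeff_substT]
    apply Finset.sum_congr rfl
    intro m hm
    rw [mem_Iic_bnd_iff] at hm
    congr 1
    rw [coeff_pd, coeff_pd, hPc]
    intro j
    have h1 : ((m + Finsupp.single i 1 : σ →₀ ℕ)) j = m j + (Finsupp.single i 1 : σ →₀ ℕ) j :=
      Finsupp.add_apply m (Finsupp.single i 1) j
    have h2 : (Finsupp.single i 1 : σ →₀ ℕ) j ≤ 1 := by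
      rw [Finsupp.single_apply]
      split <;> omega
    have hmj : m j ≤ mdeg a := hm j
    rw [h1, hN]
    omega
  rw [hL, hR, hP, pd_substT_finsum G h0]

end Subst

/-- The tuple `(X + SΦ)_i = x_i + Σ_j s_{ij}·Φ_j`. -/
noncomputable def xsPhi {r : ℕ} {R : Type*} [CommRing R]
    (Φ : Fin r → MvPowerSeries (Fin r ⊕ SVar r) R) (i : Fin r) :
    MvPowerSeries (Fin r ⊕ SVar r) R :=
  MvPowerSeries.X (Sum.inl i) +
    ∑ j, MvPowerSeries.X (Sum.inr (sIdx i j)) * Φ j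

/-- The matrix `S = (s_{ij})` over `A`. -/
noncomputable def sMat (r : ℕ) (R : Type*) [CommRing R] :
    Matrix (Fin r) (Fin r) (MvPowerSeries (Fin r ⊕ SVar r) R) :=
  fun i j => MvPowerSeries.X (Sum.inr (sIdx i j))

/-- Let `F_i = ∂U₀/∂x_i`, `H = (∂²U₀/∂x_i∂x_j)`, and let `Φ` solve
`Φ_m = F_m(X+SΦ)`.  With `Θ_{ij} = ∂Φ_i/∂x_j`, the matrix `E + SΘ` is a two-sided
inverse of `E − S·H(X+SΦ)`. -/
theorem stmt7 {r : ℕ} (hr : 1 ≤ r) (R : Type*) [CommRing R] [Algebra ℚ R]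
    (U₀ : MvPowerSeries (Fin r) R)
    (Φ : Fin r → MvPowerSeries (Fin r ⊕ SVar r) R)
    (hΦ : ∀ m, Φ m = substT (pd R m U₀) (xsPhi Φ)) :
    (1 + sMat r R * Matrix.of (fun i j => pd R (Sum.inl j) (Φ i))) *
        (1 - sMat r R * Matrix.of (fun i j => substT (pd R i (pd R j U₀)) (xsPhi Φ))) = 1 ∧
    (1 - sMat r R * Matrix.of (fun i j => substT (pd R i (pd R j U₀)) (xsPhi Φ))) *
        (1 + sMat r R * Matrix.of (fun i j => pd R (Sum.inl j) (Φ i))) = 1 := by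
  have h0 : ∀ k, MvPowerSeries.constantCoeff (σ := Fin r ⊕ SVar r) (R := R) (xsPhi Φ k) = 0 := by
    intro k
    rw [xsPhi, map_add, map_sum, MvPowerSeries.constantCoeff_X]
    simp [MvPowerSeries.constantCoeff_X]
  set Θ : Matrix (Fin r) (Fin r) (MvPowerSeries (Fin r ⊕ SVar r) R)
    := Matrix.of (fun i j => pd R (Sum.inl j) (Φ i)) with hΘ
  set Hm : Matrix (Fin r) (Fin r) (MvPowerSeries (Fin r ⊕ SVar r) R)
    := Matrix.of (fun i j => substT (pd R i (pd R j U₀)) (xsPhi Φ)) with hHm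
  set S := sMat r R with hS
  have hxs : ∀ (k : Fin r) (j : Fin r), pd R (Sum.inl j : Fin r ⊕ SVar r) (xsPhi Φ k)
      = (if k = j then 1 else 0)
        + ∑ l, MvPowerSeries.X (Sum.inr (sIdx k l)) * pd R (Sum.inl j : Fin r ⊕ SVar r) (Φ l) := by
    intro k j
    rw [xsPhi, pd_add, pd_X]
    have hsum : pd R (Sum.inl j : Fin r ⊕ SVar r)
        (∑ l, MvPowerSeries.X (Sum.inr (sIdx k l)) * Φ l)
        = ∑ l, pd R (Sum.inl j : Fin r ⊕ SVar r)
            (MvPowerSeries.X (Sum.inr (sIdx k l)) * Φ l) :=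
      map_sum (pdHom (Sum.inl j)) _ _
    rw [hsum]
    congr 1
    · by_cases h : k = j <;> simp [h]
    · apply Finset.sum_congr rfl
      intro l _
      rw [pd_mul, pd_X, if_neg (by simp), zero_mul, zero_add]
  have key : Θ = Hm * (1 + S * Θ) := by
    refine Matrix.ext fun i j => ?_
    rw [Matrix.mul_apply]
    show pd R (Sum.inl j : Fin r ⊕ SVar r) (Φ i) = _
    rw [hΦ i, pd_substT _ _ h0]
    apply Finset.sum_congr rfl
    intro k _
    rw [hxs k j]
    congr 1
    rw [pd_comm]
    rfl
  have second : (1 - S * Hm) * (1 + S * Θ) = 1 := by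
    have e1 : S * Θ = S * Hm * (1 + S * Θ) := by
      conv_lhs => rw [key]
      rw [Matrix.mul_assoc]
    calc (1 - S * Hm) * (1 + S * Θ)
        = (1 + S * Θ) - S * Hm * (1 + S * Θ) := by rw [sub_mul, one_mul]
      _ = (1 + S * Θ) - S * Θ := by rw [← e1]
      _ = 1 := by rw [add_sub_cancel_right]
  exact ⟨mul_eq_one_comm.mpr second, second⟩
end
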